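/- arXiv:2507.14440 — 6 statements merged into one kernel-verified Lean document; each statement's English description precedes it below -/
import Mathlib

section
/- Let c₀, a₀, d₁ > 0, let x ∈ ℝ³, and let a : ℝ → ℝ³ be twice differentiable with ‖deriv a t‖ ≤ c₀, ‖deriv (deriv a) t‖ ≤ a₀ and ‖x - a t‖ ≥ d₁ for every t ∈ ℝ. Then the distance function v(t) := ‖x - a t‖ is twice differentiable on ℝ and its second derivative satisfies |deriv (deriv v) t| ≤ a₀ + 2·c₀²/d₁ for every t ∈ ℝ. -/
noncomputable section

open RealInnerProductSpace

abbrev E3 := EuclideanSpace ℝ (Fin 3)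

lemma dist_aux (c₀ a₀ d₁ : ℝ) (hd₁ : 0 < d₁) (u : ℝ → E3)
    (hu : Differentiable ℝ u) (hu' : Differentiable ℝ (deriv u))
    (hs : ∀ t, ‖deriv u t‖ ≤ c₀) (hq : ∀ t, ‖deriv (deriv u) t‖ ≤ a₀)
    (hd : ∀ t, d₁ ≤ ‖u t‖) :
    Differentiable ℝ (fun t => ‖u t‖) ∧
    Differentiable ℝ (deriv (fun t => ‖u t‖)) ∧
    (∀ t, |deriv (deriv (fun t => ‖u t‖)) t| ≤ a₀ + 2 * c₀ ^ 2 / d₁) := by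
  have hpos : ∀ t, (0:ℝ) < ‖u t‖ := fun t => lt_of_lt_of_le hd₁ (hd t)
  have hne : ∀ t, ‖u t‖ ≠ 0 := fun t => ne_of_gt (hpos t)
  -- first derivative
  have hD1 : ∀ t, HasDerivAt (fun s => ‖u s‖) (⟪u t, deriv u t⟫ / ‖u t‖) t := by
    intro t
    have hinner : HasDerivAt (fun s => ⟪u s, u s⟫) (2 * ⟪u t, deriv u t⟫) t := by
      have h := HasDerivAt.inner ℝ (hu t).hasDerivAt (hu t).hasDerivAt
      have : ⟪u t, deriv u t⟫ + ⟪deriv u t, u t⟫ = 2 * ⟪u t, deriv u t⟫ := by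
        rw [real_inner_comm (deriv u t) (u t)]; ring
      rwa [this] at h
    have hne' : ⟪u t, u t⟫ ≠ 0 := by
      rw [real_inner_self_eq_norm_sq]
      exact pow_ne_zero 2 (hne t)
    have hsq := hinner.sqrt hne'
    have hfun : (fun s : ℝ => ‖u s‖) = fun s => Real.sqrt ⟪u s, u s⟫ := by
      funext s; rw [real_inner_self_eq_norm_sq, Real.sqrt_sq (norm_nonneg _)]
    have hval : 2 * ⟪u t, deriv u t⟫ / (2 * Real.sqrt ⟪u t, u t⟫)
        = ⟪u t, deriv u t⟫ / ‖u t‖ := by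
      rw [real_inner_self_eq_norm_sq, Real.sqrt_sq (norm_nonneg _),
        mul_div_mul_left _ _ (two_ne_zero)]
    rw [hfun]
    rw [hval] at hsq
    exact hsq
  have hvdiff : Differentiable ℝ (fun t => ‖u t‖) := fun t => (hD1 t).differentiableAt
  have hdv : deriv (fun s => ‖u s‖) = fun t => ⟪u t, deriv u t⟫ / ‖u t‖ :=
    funext fun t => (hD1 t).deriv
  -- second derivative
  have hD2 : ∀ t, HasDerivAt (deriv (fun s => ‖u s‖))
      (((⟪u t, deriv (deriv u) t⟫ + ⟪deriv u t, deriv u t⟫) * ‖u t‖ -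
        ⟪u t, deriv u t⟫ * (⟪u t, deriv u t⟫ / ‖u t‖)) / ‖u t‖ ^ 2) t := by
    intro t
    rw [hdv]
    have hg : HasDerivAt (fun s => ⟪u s, deriv u s⟫)
        (⟪u t, deriv (deriv u) t⟫ + ⟪deriv u t, deriv u t⟫) t :=
      HasDerivAt.inner ℝ (hu t).hasDerivAt (hu' t).hasDerivAt
    exact hg.div (hD1 t) (hne t)
  refine ⟨hvdiff, fun t => (hD2 t).differentiableAt, fun t => ?_⟩
  have hdd := (hD2 t).deriv
  rw [hdd]
  set n := ‖u t‖ with hn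
  set s := ‖deriv u t‖ with hsdef
  set q := ‖deriv (deriv u) t‖ with hqdef
  set g := ⟪u t, deriv u t⟫ with hg
  set P := ⟪u t, deriv (deriv u) t⟫ with hP
  have hPP : ⟪deriv u t, deriv u t⟫ = s ^ 2 := by
    rw [real_inner_self_eq_norm_sq]
  rw [hPP]
  have habsP : |P| ≤ n * q := abs_real_inner_le_norm _ _
  have habsg : |g| ≤ n * s := abs_real_inner_le_norm _ _
  have hnpos : 0 < n := hpos t
  have hsnn : 0 ≤ s := norm_nonneg _
  have hqnn : 0 ≤ q := norm_nonneg _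
  have hsc : s ≤ c₀ := hs t
  have hqa : q ≤ a₀ := hq t
  have hdn : d₁ ≤ n := hd t
  -- rewrite as a single fraction
  have hX : ((P + s ^ 2) * n - g * (g / n)) / n ^ 2
      = ((P + s ^ 2) * n ^ 2 - g ^ 2) / n ^ 3 := by
    field_simp
  rw [hX]
  have hg2 : g ^ 2 ≤ n ^ 2 * s ^ 2 := by
    have h := abs_le.mp habsg
    nlinarith [sq_nonneg (n * s - g), sq_nonneg (n * s + g)]
  have hnum : |(P + s ^ 2) * n ^ 2 - g ^ 2| ≤ q * n ^ 3 + 2 * s ^ 2 * n ^ 2 := by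
    have h := abs_le.mp habsP
    rw [abs_le]
    constructor <;> nlinarith [sq_nonneg n, sq_nonneg s, mul_pos hnpos hnpos]
  have hn3 : (0:ℝ) < n ^ 3 := by positivity
  calc |((P + s ^ 2) * n ^ 2 - g ^ 2) / n ^ 3|
      = |(P + s ^ 2) * n ^ 2 - g ^ 2| / n ^ 3 := by
        rw [abs_div, abs_of_pos hn3]
    _ ≤ (q * n ^ 3 + 2 * s ^ 2 * n ^ 2) / n ^ 3 := by
        gcongr
    _ = q + 2 * s ^ 2 / n := by field_simp
    _ ≤ a₀ + 2 * c₀ ^ 2 / d₁ := by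
        have h1 : 2 * s ^ 2 / n ≤ 2 * c₀ ^ 2 / d₁ := by
          apply div_le_div₀ (by positivity) (by nlinarith) hd₁ hdn
        linarith

/-- For a twice differentiable orbit `a` with speed bound `c₀`,
acceleration bound `a₀`, staying at distance at least `d₁` from the observation point `x`,
the distance function `v t = ‖x - a t‖` is twice differentiable and
`|v'' t| ≤ a₀ + 2 c₀² / d₁`. -/
theorem stmt_2 (c₀ a₀ d₁ : ℝ) (hc₀ : 0 < c₀) (ha₀ : 0 < a₀) (hd₁ : 0 < d₁)
    (x : E3) (a : ℝ → E3)
    (ha : Differentiable ℝ a) (ha' : Differentiable ℝ (deriv a))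
    (hspeed : ∀ t : ℝ, ‖deriv a t‖ ≤ c₀)
    (hacc : ∀ t : ℝ, ‖deriv (deriv a) t‖ ≤ a₀)
    (hdist : ∀ t : ℝ, d₁ ≤ ‖x - a t‖) :
    Differentiable ℝ (fun t : ℝ => ‖x - a t‖) ∧
    Differentiable ℝ (deriv (fun t : ℝ => ‖x - a t‖)) ∧
    (∀ t : ℝ, |deriv (deriv (fun t : ℝ => ‖x - a t‖)) t| ≤ a₀ + 2 * c₀ ^ 2 / d₁) := by
  set u : ℝ → E3 := fun t => x - a t with hu_def
  have hu : Differentiable ℝ u := (differentiable_const x).sub ha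
  have hderiv_u : deriv u = fun t => -deriv a t :=
    funext fun t => (((ha t).hasDerivAt).const_sub x).deriv
  have hu' : Differentiable ℝ (deriv u) := by rw [hderiv_u]; exact ha'.neg
  have hs : ∀ t, ‖deriv u t‖ ≤ c₀ := by
    intro t; rw [hderiv_u]; simpa using hspeed t
  have hq : ∀ t, ‖deriv (deriv u) t‖ ≤ a₀ := by
    intro t
    rw [hderiv_u]
    have : deriv (fun t => -deriv a t) t = -deriv (deriv a) t := deriv.neg
    rw [this]
    simpa using hacc t
  exact dist_aux c₀ a₀ d₁ hd₁ u hu hu' hs hq hdist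
end
end

section
/- Let 0 < c₀ < c and 0 < d₁ ≤ d₀ be real numbers, let x ∈ ℝ³, and let a : ℝ → ℝ³ be continuously differentiable with ‖deriv a t‖ ≤ c₀ and d₁ ≤ ‖x - a t‖ ≤ d₀ for every t ∈ ℝ. Then the function g(t) := t + ‖x - a t‖/c is a bijection of ℝ onto ℝ, its inverse G := g⁻¹ is continuous and strictly monotone increasing, and G is differentiable at every point s = g t with deriv G (g t) = c / (c + deriv v t), where v(t) := ‖x - a t‖. -/
noncomputable section

/-- For `0 < c₀ < c`, `0 < d₁ ≤ d₀` and a `C¹` orbit `a` with speed bound `c₀`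
and distance bounds `d₁ ≤ ‖x - a t‖ ≤ d₀`, the map `g t = t + ‖x - a t‖ / c` is a bijection of
`ℝ` onto `ℝ`, its inverse `G = g⁻¹` is continuous and strictly monotone increasing, and
`G` is differentiable at each `s = g t` with `G'(g t) = c / (c + v' t)`
where `v t = ‖x - a t‖`. -/
theorem stmt_3 (c c₀ d₁ d₀ : ℝ) (hc₀ : 0 < c₀) (hc₀c : c₀ < c)
    (hd₁ : 0 < d₁) (hd₁d₀ : d₁ ≤ d₀)
    (x : E3) (a : ℝ → E3)
    (ha : ContDiff ℝ 1 a)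
    (hspeed : ∀ t : ℝ, ‖deriv a t‖ ≤ c₀)
    (hdist : ∀ t : ℝ, d₁ ≤ ‖x - a t‖ ∧ ‖x - a t‖ ≤ d₀) :
    Function.Bijective (fun t : ℝ => t + ‖x - a t‖ / c) ∧
    Continuous (Function.invFun (fun t : ℝ => t + ‖x - a t‖ / c)) ∧
    StrictMono (Function.invFun (fun t : ℝ => t + ‖x - a t‖ / c)) ∧
    (∀ t : ℝ,
      HasDerivAt (Function.invFun (fun t : ℝ => t + ‖x - a t‖ / c))
        (c / (c + deriv (fun r : ℝ => ‖x - a r‖) t))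
        (t + ‖x - a t‖ / c)) := by
  have hc : (0:ℝ) < c := lt_trans hc₀ hc₀c
  set v : ℝ → ℝ := fun r => ‖x - a r‖ with hv
  set g : ℝ → ℝ := fun t => t + v t / c with hg
  have hadiff : Differentiable ℝ a := ha.differentiable one_ne_zero
  -- a is Lipschitz with constant c₀
  have haLip : ∀ s t : ℝ, ‖a t - a s‖ ≤ c₀ * ‖t - s‖ := by
    intro s t
    exact Convex.norm_image_sub_le_of_norm_deriv_le
      (fun y _ => hadiff y) (fun y _ => hspeed y) (convex_univ) trivial trivial
  -- v is Lipschitz with constant c₀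
  have hvLip : ∀ s t : ℝ, |v t - v s| ≤ c₀ * |t - s| := by
    intro s t
    have h1 : |v t - v s| ≤ ‖(x - a t) - (x - a s)‖ := abs_norm_sub_norm_le _ _
    have h2 : (x - a t) - (x - a s) = a s - a t := by abel
    rw [h2] at h1
    calc |v t - v s| ≤ ‖a s - a t‖ := h1
      _ ≤ c₀ * ‖s - t‖ := haLip t s
      _ = c₀ * |t - s| := by rw [Real.norm_eq_abs, abs_sub_comm]
  -- v is differentiable
  have hvd : ∀ t : ℝ, DifferentiableAt ℝ v t := by
    intro t
    have hne : x - a t ≠ 0 := by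
      intro h
      have := (hdist t).1
      rw [h, norm_zero] at this
      linarith
    exact DifferentiableAt.norm ℝ ((differentiableAt_const x).sub (hadiff t)) hne
  -- bound on deriv v
  have hv' : ∀ t : ℝ, |deriv v t| ≤ c₀ := by
    intro t
    have := (hvd t).hasDerivAt
    have hlip : ∀ᶠ y in nhds t, ‖v y - v t‖ ≤ c₀ * ‖y - t‖ := by
      filter_upwards with y
      simpa [Real.norm_eq_abs] using hvLip t y
    have := (this.hasFDerivAt).le_of_lip' hc₀.le hlip
    calc |deriv v t| = ‖deriv v t‖ := rfl
      _ = ‖ContinuousLinearMap.smulRight (1 : ℝ →L[ℝ] ℝ) (deriv v t)‖ := by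
          rw [ContinuousLinearMap.norm_smulRight_apply, norm_one, one_mul]
      _ ≤ c₀ := this
  -- deriv of g
  have hgd : ∀ t : ℝ, HasDerivAt g (1 + deriv v t / c) t := by
    intro t
    exact (hasDerivAt_id t).add ((hvd t).hasDerivAt.div_const c)
  -- g strict mono
  have hmono : StrictMono g := by
    intro s t hst
    have h1 : |v t - v s| ≤ c₀ * |t - s| := hvLip s t
    rw [abs_of_pos (by linarith : (0:ℝ) < t - s)] at h1
    have h2 : -(c₀ * (t - s)) ≤ v t - v s := (abs_le.mp h1).1
    have h4 : c₀ * (t - s) / c < t - s := by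
      rw [div_lt_iff₀ hc]
      nlinarith
    have heq : g t - g s = (t - s) + (v t - v s) / c := by
      simp only [hg]; ring
    have h5 : -(c₀ * (t - s)) / c ≤ (v t - v s) / c := by gcongr
    have h6 : -(c₀ * (t - s)) / c = -(c₀ * (t - s) / c) := by ring
    have : 0 < g t - g s := by rw [heq]; linarith
    linarith
  -- g continuous
  have hgc : Continuous g := by
    have : ∀ t, DifferentiableAt ℝ g t := fun t => (hgd t).differentiableAt
    exact (Differentiable.continuous this)
  -- surjective
  have hsurj : Function.Surjective g := by
    apply hgc.surjective
    · apply Filter.tendsto_atTop_mono (fun t => ?_) (Filter.tendsto_atTop_add_const_right _ (d₁/c) Filter.tendsto_id)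
      have := (hdist t).1
      simp only [hg, hv]
      have : d₁ / c ≤ v t / c := (div_le_div_iff_of_pos_right hc).mpr (hdist t).1
      simpa using by linarith
    · apply Filter.tendsto_atBot_mono (fun t => ?_) (Filter.tendsto_atBot_add_const_right _ (d₀/c) Filter.tendsto_id)
      have : v t / c ≤ d₀ / c := (div_le_div_iff_of_pos_right hc).mpr (hdist t).2
      simpa using by linarith
  have hbij : Function.Bijective g := ⟨hmono.injective, hsurj⟩
  -- order iso
  let e : ℝ ≃o ℝ := StrictMono.orderIsoOfSurjective g hmono hsurj
  have hinv : Function.invFun g = e.symm := by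
    funext y
    have h1 : g (e.symm y) = y := e.apply_symm_apply y
    have h2 : Function.invFun g (g (e.symm y)) = e.symm y :=
      Function.leftInverse_invFun hbij.injective _
    rw [h1] at h2
    exact h2
  have hGc : Continuous (Function.invFun g) := by
    rw [hinv]; exact e.symm.continuous
  have hGm : StrictMono (Function.invFun g) := by
    rw [hinv]; exact e.symm.strictMono
  refine ⟨hbij, hGc, hGm, ?_⟩
  intro t
  have hvt : |deriv v t| ≤ c₀ := hv' t
  have hne : (1 + deriv v t / c) ≠ 0 := by
    have h1 := (abs_le.mp hvt).1
    have h2 : -c₀ / c ≤ deriv v t / c := by gcongr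
    have hc0c : -c₀ / c > -1 := by
      rw [gt_iff_lt, neg_div, neg_lt_neg_iff, div_lt_one hc]; exact hc₀c
    linarith
  have hGt : Function.invFun g (g t) = t := Function.leftInverse_invFun hbij.injective t
  have hfg : ∀ᶠ y in nhds (g t), g (Function.invFun g y) = y := by
    filter_upwards with y
    exact Function.rightInverse_invFun hbij.surjective y
  have hder : HasDerivAt (Function.invFun g) (1 + deriv v t / c)⁻¹ (g t) := by
    apply HasDerivAt.of_local_left_inverse (hGc.continuousAt) ?_ hne hfg
    rw [hGt]
    exact hgd t
  have heq : (1 + deriv v t / c)⁻¹ = c / (c + deriv v t) := by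
    have hcv : c + deriv v t ≠ 0 := by
      have := (abs_le.mp hvt).1
      intro h
      have : deriv v t = -c := by linarith
      rw [this] at hvt
      rw [abs_neg, abs_of_pos hc] at hvt
      linarith
    field_simp
  rw [heq] at hder
  exact hder
end
end

section
/- Let 0 < c₀ < c, a₀ > 0, 0 < d₁ ≤ d₀, T₀ > 0, let x ∈ ℝ³, and let a : ℝ → ℝ³ be twice continuously differentiable with ‖deriv a t‖ ≤ c₀, ‖deriv (deriv a) t‖ ≤ a₀ and d₁ ≤ ‖x - a t‖ ≤ d₀ for all t. Let f : ℝ → ℝ³ be continuously differentiable, ν ∈ ℝ³, i ∈ Fin 3, and let Hν be the tangential field of the orbit a. Assume there is m > 0 with |(Hν s) i| ≥ m for every s ∈ (g 0, T₀ + d₀/c]. If w : ℝ → ℝ is continuously differentiable on [0, T₀] with w 0 = ‖x - a 0‖, d₁ ≤ w t ≤ d₀ and t + w t / c > g 0 for all t ∈ (0, T₀], and w satisfies deriv w t = c · (f t ×₃ ν) i / (4π · w t · (Hν (t + w t / c)) i) − c for all t ∈ (0, T₀], then w t = ‖x - a t‖ for every t ∈ [0, T₀]; in particular the initial value problem has exactly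 one such solution. -/
noncomputable section

/-- The cross product on `ℝ³`. -/
def cross3 (u v : E3) : E3 :=
  WithLp.toLp 2 ![u 1 * v 2 - u 2 * v 1, u 2 * v 0 - u 0 * v 2, u 0 * v 1 - u 1 * v 0]

/-- `Hν` is the tangential field of the orbit `a` (relative to the observation point `x`,
the source profile `f` and the vector `ν`, with wave speed `c`). -/
def tangentialField (c : ℝ) (x : E3) (a f : ℝ → E3) (ν : E3) (Hν : ℝ → E3) : Prop :=
  (∀ s : ℝ, s < ‖x - a 0‖ / c → Hν s = 0) ∧
  (∀ t : ℝ, 0 ≤ t →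
    Hν (t + ‖x - a t‖ / c) =
      (c / (4 * Real.pi * ‖x - a t‖ * (c + deriv (fun r : ℝ => ‖x - a r‖) t))) •
        cross3 (f t) ν)

lemma cross3_contDiff {u : ℝ → E3} (hu : ContDiff ℝ 1 u) (ν : E3) (j : Fin 3) :
    ContDiff ℝ 1 (fun t => cross3 (u t) ν j) := by
  have h : ∀ k : Fin 3, ContDiff ℝ 1 (fun t => u t k) := fun k => contDiff_euclidean.mp hu k
  fin_cases j
  · show ContDiff ℝ 1 (fun t => u t 1 * ν 2 - u t 2 * ν 1)
    exact ((h 1).mul contDiff_const).sub ((h 2).mul contDiff_const)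
  · show ContDiff ℝ 1 (fun t => u t 2 * ν 0 - u t 0 * ν 2)
    exact ((h 2).mul contDiff_const).sub ((h 0).mul contDiff_const)
  · show ContDiff ℝ 1 (fun t => u t 0 * ν 1 - u t 1 * ν 0)
    exact ((h 0).mul contDiff_const).sub ((h 1).mul contDiff_const)

open Set

set_option maxHeartbeats 1000000 in
/-- Uniqueness for the initial value problem
`w' t = c (f t ×₃ ν) i / (4π w t (Hν (t + w t / c)) i) − c`, `w 0 = ‖x - a 0‖`:
any `C¹` solution staying in `[d₁, d₀]` with `t + w t / c > g 0` on `(0, T₀]`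
coincides with the distance function `t ↦ ‖x - a t‖` on `[0, T₀]`. -/
theorem stmt_6 (c c₀ a₀ d₁ d₀ T₀ : ℝ)
    (hc₀ : 0 < c₀) (hc₀c : c₀ < c) (ha₀ : 0 < a₀)
    (hd₁ : 0 < d₁) (hd₁d₀ : d₁ ≤ d₀) (hT₀ : 0 < T₀)
    (x : E3) (a : ℝ → E3)
    (ha : ContDiff ℝ 2 a)
    (hspeed : ∀ t : ℝ, ‖deriv a t‖ ≤ c₀)
    (hacc : ∀ t : ℝ, ‖deriv (deriv a) t‖ ≤ a₀)
    (hdist : ∀ t : ℝ, d₁ ≤ ‖x - a t‖ ∧ ‖x - a t‖ ≤ d₀)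
    (f : ℝ → E3) (hf : ContDiff ℝ 1 f) (ν : E3) (i : Fin 3)
    (Hν : ℝ → E3) (hH : tangentialField c x a f ν Hν)
    (m : ℝ) (hm : 0 < m)
    (hHm : ∀ s ∈ Set.Ioc (‖x - a 0‖ / c) (T₀ + d₀ / c), m ≤ |(Hν s) i|)
    (w : ℝ → ℝ) (hw : ContDiffOn ℝ 1 w (Set.Icc 0 T₀))
    (hw0 : w 0 = ‖x - a 0‖)
    (hwbd : ∀ t ∈ Set.Ioc 0 T₀, d₁ ≤ w t ∧ w t ≤ d₀ ∧ ‖x - a 0‖ / c < t + w t / c)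
    (hode : ∀ t ∈ Set.Ioc 0 T₀,
      deriv w t =
        c * (cross3 (f t) ν) i /
          (4 * Real.pi * w t * (Hν (t + w t / c)) i) - c) :
    ∀ t ∈ Set.Icc 0 T₀, w t = ‖x - a t‖ := by
  obtain ⟨hH1, hH2⟩ := hH
  have hπ : (0:ℝ) < Real.pi := Real.pi_pos
  have h4π : (0:ℝ) < 4 * Real.pi := by positivity
  have hc : (0:ℝ) < c := hc₀.trans hc₀c
  set v : ℝ → ℝ := fun r : ℝ => ‖x - a r‖ with hv_def
  have hvd1 : ∀ t, d₁ ≤ v t := fun t => (hdist t).1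
  have hvd0 : ∀ t, v t ≤ d₀ := fun t => (hdist t).2
  have hvpos : ∀ t, 0 < v t := fun t => lt_of_lt_of_le hd₁ (hvd1 t)
  have hxa : ∀ t, x - a t ≠ 0 := fun t => norm_pos_iff.mp (hvpos t)
  have hvC2 : ContDiff ℝ 2 v := (contDiff_const.sub ha).norm ℝ hxa
  have hvC1 : ContDiff ℝ 1 v := hvC2.of_le (by norm_num)
  have hvdiff : Differentiable ℝ v := hvC1.differentiable one_ne_zero
  have hv'C1 : ContDiff ℝ 1 (deriv v) := by
    have h21 : (2 : WithTop ℕ∞) = 1 + 1 := by norm_num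
    rw [h21] at hvC2
    exact (contDiff_succ_iff_deriv.mp hvC2).2.2
  -- Lipschitz bound on v and its derivative
  have hvLip : ∀ s t : ℝ, |v s - v t| ≤ c₀ * |s - t| := by
    intro s t
    have haL : ‖a t - a s‖ ≤ c₀ * |t - s| := by
      have := Convex.norm_image_sub_le_of_norm_deriv_le (f := a) (s := Set.univ)
        (fun y _ => (ha.differentiable (by norm_num)).differentiableAt)
        (fun y _ => hspeed y) convex_univ (Set.mem_univ s) (Set.mem_univ t)
      simpa [Real.norm_eq_abs] using this
    have h1 : |v s - v t| ≤ ‖(x - a s) - (x - a t)‖ := abs_norm_sub_norm_le _ _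
    have h2 : (x - a s) - (x - a t) = a t - a s := by abel
    rw [h2] at h1
    calc |v s - v t| ≤ c₀ * |t - s| := h1.trans haL
    _ = c₀ * |s - t| := by rw [abs_sub_comm]
  have hv'le : ∀ t, |deriv v t| ≤ c₀ := by
    intro t
    have h := (hvdiff t).hasDerivAt.le_of_lip' hc₀.le ?_
    · simpa [Real.norm_eq_abs] using h
    · filter_upwards with s
      simpa [Real.norm_eq_abs] using hvLip s t
  have hder_pos : ∀ t, 0 < c + deriv v t := by
    intro t
    have := (abs_le.mp (hv'le t)).1
    linarith
  -- the time-of-flight function g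
  set g : ℝ → ℝ := fun t => t + v t / c with hg_def
  have hg0 : g 0 = ‖x - a 0‖ / c := by simp [hg_def, hv_def]
  have hcoef : 0 < 1 - c₀ / c := by
    have : c₀ / c < 1 := (div_lt_one hc).mpr hc₀c
    linarith
  have hgmono : ∀ s t : ℝ, s ≤ t → (1 - c₀ / c) * (t - s) ≤ g t - g s := by
    intro s t hst
    have h := hvLip t s
    rw [abs_of_nonneg (by linarith : (0:ℝ) ≤ t - s)] at h
    have h1 : -(c₀ * (t - s)) ≤ v t - v s := (abs_le.mp h).1
    have h2 : -(c₀ * (t - s)) / c ≤ (v t - v s) / c := by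
      exact div_le_div_of_nonneg_right h1 hc.le
    have h3 : g t - g s = (t - s) + (v t - v s) / c := by
      simp only [hg_def]; ring
    have h4 : (1 - c₀ / c) * (t - s) = (t - s) + -(c₀ * (t - s)) / c := by ring
    linarith
  have hgle : ∀ s t : ℝ, s ≤ t → g s ≤ g t := by
    intro s t hst
    have h1 := hgmono s t hst
    have h2 : 0 ≤ (1 - c₀ / c) * (t - s) := mul_nonneg hcoef.le (by linarith)
    exact sub_nonneg.mp (le_trans h2 h1)
  have hgcont : Continuous g := continuous_id.add (hvC1.continuous.div_const c)
  -- the interval of retarded times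
  set I : Set ℝ := Set.Icc (g 0) (T₀ + d₀ / c) with hI_def
  have hgmemI : ∀ t ∈ Set.Icc 0 T₀, g t ∈ I := by
    intro t ht
    refine ⟨hgle 0 t ht.1, ?_⟩
    have h1 : v t / c ≤ d₀ / c := div_le_div_of_nonneg_right (hvd0 t) hc.le
    have h2 : g t = t + v t / c := rfl
    rw [h2]
    exact add_le_add ht.2 h1
  -- surjectivity of g onto I
  have hd₀ : (0:ℝ) < d₀ := hd₁.trans_le hd₁d₀
  have hTstar : (0:ℝ) ≤ T₀ + d₀ / c := by
    have : 0 < d₀ / c := div_pos hd₀ hc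
    linarith
  have hgTstar : T₀ + d₀ / c ≤ g (T₀ + d₀ / c) := by
    have h1 : 0 < v (T₀ + d₀ / c) / c := div_pos (hvpos _) hc
    have h2 : g (T₀ + d₀ / c) = (T₀ + d₀ / c) + v (T₀ + d₀ / c) / c := rfl
    linarith
  have hsurj : ∀ s ∈ I, ∃ t ∈ Set.Icc (0:ℝ) (T₀ + d₀ / c), g t = s := by
    intro s hs
    have hmem : s ∈ Set.Icc (g 0) (g (T₀ + d₀ / c)) := ⟨hs.1, hs.2.trans hgTstar⟩
    obtain ⟨t, ht, hgt⟩ := intermediate_value_Icc hTstar hgcont.continuousOn hmem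
    exact ⟨t, ht, hgt⟩
  -- the pulled-back tangential field P
  set A : ℝ → ℝ := fun t => cross3 (f t) ν i with hA_def
  have hAC1 : ContDiff ℝ 1 A := cross3_contDiff hf ν i
  set P : ℝ → ℝ := fun t => (c / (4 * Real.pi * v t * (c + deriv v t))) * A t with hP_def
  have hPden : ∀ t, 0 < 4 * Real.pi * v t * (c + deriv v t) :=
    fun t => mul_pos (mul_pos h4π (hvpos t)) (hder_pos t)
  have hPC1 : ContDiff ℝ 1 P := by
    refine ContDiff.mul ?_ hAC1
    exact contDiff_const.div ((contDiff_const.mul hvC1).mul (contDiff_const.add hv'C1))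
      (fun t => (hPden t).ne')
  have hHgP : ∀ t : ℝ, 0 ≤ t → (Hν (g t)) i = P t := by
    intro t ht
    have h := hH2 t ht
    have h2 : (Hν (g t)) i =
        ((c / (4 * Real.pi * v t * (c + deriv v t))) • cross3 (f t) ν) i :=
      congrArg (fun z => z i) h
    simpa [hP_def, hA_def, PiLp.smul_apply, smul_eq_mul] using h2
  -- bounds for P on [0, T₀ + d₀/c]
  obtain ⟨M₀, hM₀⟩ := (isCompact_Icc (a := (0:ℝ)) (b := T₀ + d₀ / c)).exists_bound_of_continuousOn
    hPC1.continuous.continuousOn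
  set M : ℝ := max M₀ 0 with hM_def
  have hMnn : 0 ≤ M := le_max_right _ _
  have hM : ∀ t ∈ Set.Icc (0:ℝ) (T₀ + d₀ / c), |P t| ≤ M := by
    intro t ht
    have := hM₀ t ht
    rw [Real.norm_eq_abs] at this
    exact this.trans (le_max_left _ _)
  obtain ⟨L₀, hL₀⟩ := (isCompact_Icc (a := (0:ℝ)) (b := T₀ + d₀ / c)).exists_bound_of_continuousOn
    ((contDiff_one_iff_deriv.mp hPC1).2).continuousOn
  set L : ℝ := max L₀ 0 with hL_def
  have hLnn : 0 ≤ L := le_max_right _ _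
  have hPLip : ∀ s ∈ Set.Icc (0:ℝ) (T₀ + d₀ / c), ∀ t ∈ Set.Icc (0:ℝ) (T₀ + d₀ / c),
      |P s - P t| ≤ L * |s - t| := by
    intro s hs t ht
    have := Convex.norm_image_sub_le_of_norm_deriv_le (f := P) (C := L)
      (s := Set.Icc (0:ℝ) (T₀ + d₀ / c))
      (fun y _ => (hPC1.differentiable one_ne_zero).differentiableAt)
      (fun y hy => by
        have := hL₀ y hy
        rw [Real.norm_eq_abs] at this ⊢
        exact this.trans (le_max_left _ _))
      (convex_Icc _ _) ht hs
    simpa [Real.norm_eq_abs] using this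
  -- the scalar tangential field
  set Hi : ℝ → ℝ := fun s => (Hν s) i with hHi_def
  set KH : ℝ := L * (1 - c₀ / c)⁻¹ with hKH_def
  have hKHnn : 0 ≤ KH := mul_nonneg hLnn (inv_nonneg.mpr hcoef.le)
  have hHgP' : ∀ t : ℝ, 0 ≤ t → Hi (g t) = P t := hHgP
  clear_value v g A P M L Hi KH
  have hIsub : ∀ s ∈ I, ∀ t ∈ Set.Icc (0:ℝ) (T₀ + d₀ / c), g t = s →
      t ∈ Set.Icc (0:ℝ) (T₀ + d₀ / c) := fun _ _ t ht _ => ht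
  have hHiLip : ∀ s₁ ∈ I, ∀ s₂ ∈ I, |Hi s₁ - Hi s₂| ≤ KH * |s₁ - s₂| := by
    intro s₁ hs₁ s₂ hs₂
    obtain ⟨t₁, ht₁, he₁⟩ := hsurj s₁ hs₁
    obtain ⟨t₂, ht₂, he₂⟩ := hsurj s₂ hs₂
    have habs : (1 - c₀ / c) * |t₁ - t₂| ≤ |s₁ - s₂| := by
      rcases le_total t₂ t₁ with hle | hle
      · have h1 := hgmono t₂ t₁ hle
        rw [abs_of_nonneg (by linarith : (0:ℝ) ≤ t₁ - t₂)]
        have h2 : g t₁ - g t₂ ≤ |s₁ - s₂| := by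
          rw [he₁, he₂]; exact le_abs_self _
        linarith
      · have h1 := hgmono t₁ t₂ hle
        rw [abs_of_nonpos (by linarith : t₁ - t₂ ≤ 0)]
        have h2 : g t₂ - g t₁ ≤ |s₁ - s₂| := by
          rw [he₁, he₂, abs_sub_comm]; exact le_abs_self _
        linarith
    have ht12 : |t₁ - t₂| ≤ (1 - c₀ / c)⁻¹ * |s₁ - s₂| := by
      rw [← mul_le_mul_iff_right₀ hcoef, ← mul_assoc, mul_inv_cancel₀ hcoef.ne', one_mul]
      exact habs
    have hHP₁ : Hi s₁ = P t₁ := by rw [← he₁]; exact hHgP' t₁ ht₁.1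
    have hHP₂ : Hi s₂ = P t₂ := by rw [← he₂]; exact hHgP' t₂ ht₂.1
    rw [hHP₁, hHP₂]
    calc |P t₁ - P t₂| ≤ L * |t₁ - t₂| := hPLip t₁ ht₁ t₂ ht₂
    _ ≤ L * ((1 - c₀ / c)⁻¹ * |s₁ - s₂|) := mul_le_mul_of_nonneg_left ht12 hLnn
    _ = KH * |s₁ - s₂| := by rw [hKH_def]; ring
  have hHiM : ∀ s ∈ I, |Hi s| ≤ M := by
    intro s hs
    obtain ⟨t, ht, he⟩ := hsurj s hs
    have : Hi s = P t := by rw [← he]; exact hHgP' t ht.1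
    rw [this]; exact hM t ht
  -- lower bound m on I, including the left endpoint
  have hHim : ∀ s ∈ I, m ≤ |Hi s| := by
    intro s hs
    rcases eq_or_lt_of_le hs.1 with heq | hlt
    · have hPt : ∀ t ∈ Set.Ioc (0:ℝ) T₀, m ≤ |P t| := by
        intro t ht
        have hmem : g t ∈ Set.Ioc (‖x - a 0‖ / c) (T₀ + d₀ / c) := by
          constructor
          · rw [← hg0]
            have h1 := hgmono 0 t ht.1.le
            have h2 : 0 < (1 - c₀ / c) * (t - 0) := mul_pos hcoef (by linarith [ht.1])
            linarith
          · exact (hgmemI t ⟨ht.1.le, ht.2⟩).2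
        have h := hHm (g t) hmem
        rwa [hHgP t ht.1.le] at h
      have hPcont : ContinuousAt (fun t => |P t|) 0 := (hPC1.continuous.abs).continuousAt
      have htend : Filter.Tendsto (fun t => |P t|) (nhdsWithin 0 (Set.Ioi 0)) (nhds |P 0|) :=
        hPcont.continuousWithinAt.tendsto
      have hev : ∀ᶠ t in nhdsWithin 0 (Set.Ioi (0:ℝ)), m ≤ |P t| := by
        filter_upwards [Ioc_mem_nhdsGT_of_mem (Set.left_mem_Ico.mpr hT₀)] with t ht
        exact hPt t ht
      have hm0 : m ≤ |P 0| := ge_of_tendsto htend hev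
      have : Hi s = P 0 := by
        rw [← heq]
        exact hHgP' 0 le_rfl
      rw [this]; exact hm0
    · have : s ∈ Set.Ioc (‖x - a 0‖ / c) (T₀ + d₀ / c) := ⟨by rwa [← hg0], hs.2⟩
      simp only [hHi_def]
      exact hHm s this
  have hHiLW : LipschitzOnWith (Real.toNNReal KH) Hi I := by
    rw [lipschitzOnWith_iff_dist_le_mul]
    intro a₁ h₁ a₂ h₂
    rw [Real.dist_eq, Real.dist_eq, Real.coe_toNNReal _ hKHnn]
    exact hHiLip a₁ h₁ a₂ h₂
  -- bound for A on [0, T₀]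
  obtain ⟨MA₀, hMA₀⟩ := (isCompact_Icc (a := (0:ℝ)) (b := T₀)).exists_bound_of_continuousOn
    hAC1.continuous.continuousOn
  set MA : ℝ := max MA₀ 0 with hMA_def
  have hMAnn : 0 ≤ MA := le_max_right _ _
  have hMA : ∀ t ∈ Set.Icc (0:ℝ) T₀, |A t| ≤ MA := by
    intro t ht
    have := hMA₀ t ht
    rw [Real.norm_eq_abs] at this
    exact this.trans (le_max_left _ _)
  clear_value MA
  -- clamping to [0, T₀]
  set proj : ℝ → ℝ := fun t => max 0 (min t T₀) with hproj_def
  have hprojmem : ∀ t : ℝ, proj t ∈ Set.Icc (0:ℝ) T₀ := by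
    intro t
    simp only [hproj_def]
    exact ⟨le_max_left _ _, max_le hT₀.le (min_le_right _ _)⟩
  have hprojid : ∀ t ∈ Set.Icc (0:ℝ) T₀, proj t = t := by
    intro t ht
    simp only [hproj_def]
    rw [min_eq_left ht.2, max_eq_right ht.1]
  have hprojcont : Continuous proj := by
    simp only [hproj_def]
    exact continuous_const.max (continuous_id.min continuous_const)
  clear_value proj
  -- the ODE right-hand side and the admissible sets
  set F : ℝ → ℝ → ℝ :=
    fun t y => c * A (proj t) / (4 * Real.pi * y * Hi (t + y / c)) - c with hF_def
  set S : ℝ → Set ℝ := fun t => {y : ℝ | y ∈ Set.Icc d₁ d₀ ∧ t + y / c ∈ I} with hS_def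
  set Kc : ℝ := c * MA * (4 * Real.pi * (M + d₀ * KH / c)) / (4 * Real.pi * d₁ * m) ^ 2
    with hKc_def
  have hdenpos : 0 < 4 * Real.pi * d₁ * m := by positivity
  have hKcnn : 0 ≤ Kc := by
    rw [hKc_def]
    apply div_nonneg _ (by positivity)
    exact mul_nonneg (mul_nonneg hc.le hMAnn)
      (mul_nonneg h4π.le (add_nonneg hMnn (div_nonneg (mul_nonneg hd₀.le hKHnn) hc.le)))
  -- Lipschitz continuity of the RHS
  have hFLip : ∀ t : ℝ, LipschitzOnWith (Real.toNNReal Kc) (F t) (S t) := by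
    intro t
    rw [lipschitzOnWith_iff_dist_le_mul]
    intro y₁ hy₁ y₂ hy₂
    obtain ⟨hy₁d, hy₁I⟩ := hy₁
    obtain ⟨hy₂d, hy₂I⟩ := hy₂
    rw [Real.dist_eq, Real.dist_eq, Real.coe_toNNReal _ hKcnn]
    have hms₁ := hHim _ hy₁I
    have hms₂ := hHim _ hy₂I
    have hM₂ := hHiM _ hy₂I
    have hy₁0 : 0 < y₁ := hd₁.trans_le hy₁d.1
    have hy₂0 : 0 < y₂ := hd₁.trans_le hy₂d.1
    have habs₁ : 4 * Real.pi * d₁ * m ≤ |4 * Real.pi * y₁ * Hi (t + y₁ / c)| := by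
      rw [abs_mul, abs_of_pos (mul_pos h4π hy₁0)]
      calc 4 * Real.pi * d₁ * m ≤ 4 * Real.pi * y₁ * m := by nlinarith [hy₁d.1]
      _ ≤ 4 * Real.pi * y₁ * |Hi (t + y₁ / c)| :=
          mul_le_mul_of_nonneg_left hms₁ (mul_pos h4π hy₁0).le
    have habs₂ : 4 * Real.pi * d₁ * m ≤ |4 * Real.pi * y₂ * Hi (t + y₂ / c)| := by
      rw [abs_mul, abs_of_pos (mul_pos h4π hy₂0)]
      calc 4 * Real.pi * d₁ * m ≤ 4 * Real.pi * y₂ * m := by nlinarith [hy₂d.1]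
      _ ≤ 4 * Real.pi * y₂ * |Hi (t + y₂ / c)| :=
          mul_le_mul_of_nonneg_left hms₂ (mul_pos h4π hy₂0).le
    have hu₁ne : 4 * Real.pi * y₁ * Hi (t + y₁ / c) ≠ 0 :=
      abs_pos.mp (lt_of_lt_of_le hdenpos habs₁)
    have hu₂ne : 4 * Real.pi * y₂ * Hi (t + y₂ / c) ≠ 0 :=
      abs_pos.mp (lt_of_lt_of_le hdenpos habs₂)
    have hF₁ : F t y₁ = c * A (proj t) / (4 * Real.pi * y₁ * Hi (t + y₁ / c)) - c := rfl
    have hF₂ : F t y₂ = c * A (proj t) / (4 * Real.pi * y₂ * Hi (t + y₂ / c)) - c := rfl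
    have hHd : |Hi (t + y₂ / c) - Hi (t + y₁ / c)| ≤ KH * (|y₁ - y₂| / c) := by
      have h1 := hHiLip _ hy₂I _ hy₁I
      have h2 : |(t + y₂ / c) - (t + y₁ / c)| = |y₁ - y₂| / c := by
        have : (t + y₂ / c) - (t + y₁ / c) = (y₂ - y₁) / c := by ring
        rw [this, abs_div, abs_of_pos hc, abs_sub_comm]
      rw [h2] at h1
      exact h1
    have hnum : |c * A (proj t) * ((4 * Real.pi * y₂ * Hi (t + y₂ / c)) -
          (4 * Real.pi * y₁ * Hi (t + y₁ / c)))| ≤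
        (c * MA) * (4 * Real.pi * (M + d₀ * KH / c) * |y₁ - y₂|) := by
      rw [abs_mul]
      have hp1 : |c * A (proj t)| ≤ c * MA := by
        rw [abs_mul, abs_of_pos hc]
        exact mul_le_mul_of_nonneg_left (hMA _ (hprojmem t)) hc.le
      have hdec : (4 * Real.pi * y₂ * Hi (t + y₂ / c)) - (4 * Real.pi * y₁ * Hi (t + y₁ / c)) =
          4 * Real.pi * ((y₂ - y₁) * Hi (t + y₂ / c)) +
          4 * Real.pi * (y₁ * (Hi (t + y₂ / c) - Hi (t + y₁ / c))) := by ring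
      have hp2 : |(4 * Real.pi * y₂ * Hi (t + y₂ / c)) - (4 * Real.pi * y₁ * Hi (t + y₁ / c))| ≤
          4 * Real.pi * (M + d₀ * KH / c) * |y₁ - y₂| := by
        rw [hdec]
        have q1 : |4 * Real.pi * ((y₂ - y₁) * Hi (t + y₂ / c))| =
            4 * Real.pi * (|y₂ - y₁| * |Hi (t + y₂ / c)|) := by
          rw [abs_mul, abs_of_pos h4π, abs_mul]
        have q2 : |4 * Real.pi * (y₁ * (Hi (t + y₂ / c) - Hi (t + y₁ / c)))| =
            4 * Real.pi * (y₁ * |Hi (t + y₂ / c) - Hi (t + y₁ / c)|) := by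
          rw [abs_mul, abs_of_pos h4π, abs_mul, abs_of_pos hy₁0]
        have pa : |y₂ - y₁| * |Hi (t + y₂ / c)| ≤ |y₁ - y₂| * M := by
          rw [abs_sub_comm]
          exact mul_le_mul_of_nonneg_left hM₂ (abs_nonneg _)
        have pb : y₁ * |Hi (t + y₂ / c) - Hi (t + y₁ / c)| ≤ d₀ * (KH * (|y₁ - y₂| / c)) :=
          mul_le_mul hy₁d.2 hHd (abs_nonneg _) hd₀.le
        calc |4 * Real.pi * ((y₂ - y₁) * Hi (t + y₂ / c)) +
              4 * Real.pi * (y₁ * (Hi (t + y₂ / c) - Hi (t + y₁ / c)))| ≤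
            |4 * Real.pi * ((y₂ - y₁) * Hi (t + y₂ / c))| +
              |4 * Real.pi * (y₁ * (Hi (t + y₂ / c) - Hi (t + y₁ / c)))| := abs_add_le _ _
        _ = 4 * Real.pi * (|y₂ - y₁| * |Hi (t + y₂ / c)|) +
              4 * Real.pi * (y₁ * |Hi (t + y₂ / c) - Hi (t + y₁ / c)|) := by rw [q1, q2]
        _ ≤ 4 * Real.pi * (|y₁ - y₂| * M) + 4 * Real.pi * (d₀ * (KH * (|y₁ - y₂| / c))) :=
            add_le_add (mul_le_mul_of_nonneg_left pa h4π.le)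
              (mul_le_mul_of_nonneg_left pb h4π.le)
        _ = 4 * Real.pi * (M + d₀ * KH / c) * |y₁ - y₂| := by ring
      exact mul_le_mul hp1 hp2 (abs_nonneg _) (mul_nonneg hc.le hMAnn)
    have hden : (4 * Real.pi * d₁ * m) ^ 2 ≤
        |(4 * Real.pi * y₁ * Hi (t + y₁ / c)) * (4 * Real.pi * y₂ * Hi (t + y₂ / c))| := by
      rw [abs_mul, sq]
      exact mul_le_mul habs₁ habs₂ hdenpos.le (abs_nonneg _)
    calc |F t y₁ - F t y₂| = |c * A (proj t) * ((4 * Real.pi * y₂ * Hi (t + y₂ / c)) -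
          (4 * Real.pi * y₁ * Hi (t + y₁ / c)))| /
          |(4 * Real.pi * y₁ * Hi (t + y₁ / c)) * (4 * Real.pi * y₂ * Hi (t + y₂ / c))| := by
          rw [hF₁, hF₂, sub_sub_sub_cancel_right, div_sub_div _ _ hu₁ne hu₂ne, abs_div]
          congr 2
          ring
    _ ≤ (c * MA) * (4 * Real.pi * (M + d₀ * KH / c) * |y₁ - y₂|) /
          (4 * Real.pi * d₁ * m) ^ 2 := by
        apply div_le_div₀ _ hnum (by positivity) hden
        exact mul_nonneg (mul_nonneg hc.le hMAnn)
          (mul_nonneg (mul_nonneg h4π.le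
            (add_nonneg hMnn (div_nonneg (mul_nonneg hd₀.le hKHnn) hc.le))) (abs_nonneg _))
    _ = Kc * |y₁ - y₂| := by rw [hKc_def]; ring
  -- membership of the two solutions
  have hwS : ∀ t ∈ Set.Icc (0:ℝ) T₀, w t ∈ S t := by
    intro t ht
    rcases eq_or_lt_of_le ht.1 with heq | hpos
    · refine ⟨?_, ?_, ?_⟩
      · rw [← heq, hw0]; exact ⟨(hdist 0).1, (hdist 0).2⟩
      · rw [← heq, hw0, hg0]
        simp
      · rw [← heq, hw0]
        have h1 : ‖x - a 0‖ / c ≤ d₀ / c := div_le_div_of_nonneg_right (hdist 0).2 hc.le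
        simp only [zero_add]
        linarith
    · obtain ⟨h1, h2, h3⟩ := hwbd t ⟨hpos, ht.2⟩
      refine ⟨⟨h1, h2⟩, ?_, ?_⟩
      · rw [hg0]; exact h3.le
      · exact add_le_add ht.2 (div_le_div_of_nonneg_right h2 hc.le)
  have hvS : ∀ t ∈ Set.Icc (0:ℝ) T₀, v t ∈ S t := by
    intro t ht
    refine ⟨⟨hvd1 t, hvd0 t⟩, ?_⟩
    have h1 : t + v t / c = g t := by rw [hg_def]
    rw [h1]
    exact hgmemI t ht
  -- A is nonvanishing on [0, T₀]
  have hAne : ∀ t ∈ Set.Icc (0:ℝ) T₀, A t ≠ 0 := by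
    intro t ht hA0
    have h1 := hHim (g t) (hgmemI t ht)
    rw [hHgP' t ht.1] at h1
    simp only [hP_def] at h1
    rw [hA0, mul_zero, abs_zero] at h1
    exact absurd h1 (not_le.mpr hm)
  -- the distance function solves the ODE
  have hvF : ∀ t ∈ Set.Icc (0:ℝ) T₀, F t (v t) = deriv v t := by
    intro t ht
    have hHieq : Hi (t + v t / c) = c / (4 * Real.pi * v t * (c + deriv v t)) * A t := by
      have h1 : t + v t / c = g t := by rw [hg_def]
      rw [h1, hHgP' t ht.1, hP_def]
    have hFeq : F t (v t) = c * A t / (4 * Real.pi * v t * Hi (t + v t / c)) - c := by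
      have h0 : F t (v t) = c * A (proj t) / (4 * Real.pi * v t * Hi (t + v t / c)) - c := rfl
      rw [h0, hprojid t ht]
    rw [hFeq, hHieq]
    have h₁ : A t ≠ 0 := hAne t ht
    have h₂ : v t ≠ 0 := (hvpos t).ne'
    have h₃ : c + deriv v t ≠ 0 := (hder_pos t).ne'
    field_simp
    ring
  have hvd' : ∀ t ∈ Set.Ico (0:ℝ) T₀, HasDerivWithinAt v (F t (v t)) (Set.Ici t) t := by
    intro t ht
    rw [hvF t ⟨ht.1, ht.2.le⟩]
    exact ((hvdiff t).hasDerivAt).hasDerivWithinAt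
  -- the solution w has the right derivative, including at t = 0
  have hHiC : ContinuousOn Hi I := hHiLW.continuousOn
  have hwmapsI : ∀ s ∈ Set.Icc (0:ℝ) T₀, s + w s / c ∈ I := fun s hs => (hwS s hs).2
  have hGcont : ContinuousOn (fun s => F s (w s)) (Set.Icc 0 T₀) := by
    have hc1 : ContinuousOn (fun s => c * A (proj s)) (Set.Icc (0:ℝ) T₀) :=
      (continuous_const.mul (hAC1.continuous.comp hprojcont)).continuousOn
    have hc2 : ContinuousOn (fun s => Hi (s + w s / c)) (Set.Icc (0:ℝ) T₀) :=
      hHiC.comp (continuousOn_id.add (hw.continuousOn.div_const c)) hwmapsI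
    have hc3 : ContinuousOn (fun s => 4 * Real.pi * w s * Hi (s + w s / c))
        (Set.Icc (0:ℝ) T₀) := (continuousOn_const.mul hw.continuousOn).mul hc2
    have hne : ∀ s ∈ Set.Icc (0:ℝ) T₀, 4 * Real.pi * w s * Hi (s + w s / c) ≠ 0 := by
      intro s hs
      have h1 := (hwS s hs).1
      have h2 := hHim _ ((hwS s hs).2)
      have hwpos : 0 < w s := hd₁.trans_le h1.1
      have h3 : 0 < |4 * Real.pi * w s * Hi (s + w s / c)| := by
        rw [abs_mul, abs_of_pos (mul_pos h4π hwpos)]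
        exact mul_pos (mul_pos h4π hwpos) (lt_of_lt_of_le hm h2)
      exact abs_pos.mp h3
    exact (hc1.div hc3 hne).sub continuousOn_const
  have hwd' : ∀ t ∈ Set.Ico (0:ℝ) T₀, HasDerivWithinAt w (F t (w t)) (Set.Ici t) t := by
    intro t ht
    rcases eq_or_lt_of_le ht.1 with heq | hpos
    · -- t = 0: identify the one-sided derivative by continuity
      have hUD : UniqueDiffOn ℝ (Set.Icc (0:ℝ) T₀) := uniqueDiffOn_Icc hT₀
      have h0mem : (0:ℝ) ∈ Set.Icc (0:ℝ) T₀ := ⟨le_rfl, hT₀.le⟩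
      have hw'cont : ContinuousOn (derivWithin w (Set.Icc 0 T₀)) (Set.Icc 0 T₀) :=
        hw.continuousOn_derivWithin hUD le_rfl
      have hnb : (nhdsWithin (0:ℝ) (Set.Ioo 0 T₀)).NeBot := by
        apply mem_closure_iff_nhdsWithin_neBot.mp
        rw [closure_Ioo hT₀.ne]
        exact ⟨le_rfl, hT₀.le⟩
      have ht1 : Filter.Tendsto (derivWithin w (Set.Icc 0 T₀))
          (nhdsWithin 0 (Set.Ioo 0 T₀)) (nhds (derivWithin w (Set.Icc 0 T₀) 0)) :=
        (hw'cont 0 h0mem).mono_left (nhdsWithin_mono _ Set.Ioo_subset_Icc_self)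
      have ht2 : Filter.Tendsto (fun s => F s (w s))
          (nhdsWithin 0 (Set.Ioo 0 T₀)) (nhds (F 0 (w 0))) :=
        (hGcont 0 h0mem).mono_left (nhdsWithin_mono _ Set.Ioo_subset_Icc_self)
      have heq' : derivWithin w (Set.Icc 0 T₀) =ᶠ[nhdsWithin (0:ℝ) (Set.Ioo 0 T₀)]
          fun s => F s (w s) := by
        filter_upwards [self_mem_nhdsWithin] with s hs
        have h1 : derivWithin w (Set.Icc 0 T₀) s = deriv w s :=
          derivWithin_of_mem_nhds (Icc_mem_nhds hs.1 hs.2)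
        rw [h1, hode s ⟨hs.1, hs.2.le⟩]
        have h2 : F s (w s) = c * A (proj s) / (4 * Real.pi * w s * Hi (s + w s / c)) - c := rfl
        rw [h2, hprojid s ⟨hs.1.le, hs.2.le⟩]
        simp only [hA_def, hHi_def]
      have hkey : derivWithin w (Set.Icc 0 T₀) 0 = F 0 (w 0) :=
        tendsto_nhds_unique ht1 (ht2.congr' heq'.symm)
      have hD : HasDerivWithinAt w (F 0 (w 0)) (Set.Icc 0 T₀) 0 := by
        rw [← hkey]
        exact ((hw.differentiableOn one_ne_zero) 0 h0mem).hasDerivWithinAt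
      have hIcc_mem : Set.Icc (0:ℝ) T₀ ∈ nhdsWithin (0:ℝ) (Set.Ici 0) := by
        rw [show Set.Icc (0:ℝ) T₀ = Set.Ici 0 ∩ Set.Iic T₀ from (Set.Ici_inter_Iic).symm]
        exact Filter.inter_mem self_mem_nhdsWithin
          (mem_nhdsWithin_of_mem_nhds (Iic_mem_nhds hT₀))
      rw [← heq]
      exact hD.mono_of_mem_nhdsWithin hIcc_mem
    · have hmem : t ∈ Set.Ioo (0:ℝ) T₀ := ⟨hpos, ht.2⟩
      have hwdiff : DifferentiableAt ℝ w t :=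
        ((hw.differentiableOn one_ne_zero) t (Set.Ioo_subset_Icc_self hmem)).differentiableAt
          (Icc_mem_nhds hmem.1 hmem.2)
      have h1 := hwdiff.hasDerivAt
      have h2 : deriv w t = F t (w t) := by
        rw [hode t ⟨hpos, ht.2.le⟩]
        have h3 : F t (w t) = c * A (proj t) / (4 * Real.pi * w t * Hi (t + w t / c)) - c := rfl
        rw [h3, hprojid t ⟨ht.1, ht.2.le⟩]
        simp only [hA_def, hHi_def]
      rw [h2] at h1
      exact h1.hasDerivWithinAt
  -- conclude by uniqueness of ODE solutions
  have hfinal : Set.EqOn w v (Set.Icc 0 T₀) :=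
    ODE_solution_unique_of_mem_Icc_right (fun t _ => hFLip t)
      hw.continuousOn hwd' (fun t ht => hwS t ⟨ht.1, ht.2.le⟩)
      hvC1.continuous.continuousOn hvd' (fun t ht => hvS t ⟨ht.1, ht.2.le⟩)
      (by rw [hw0, hv_def])
  intro t ht
  rw [hfinal ht, hv_def]
end
end

section
/- Let 0 < c₀ < c and 0 < d₁ ≤ d₀, let x ∈ ℝ³, and let a : ℝ → ℝ³ be differentiable with ‖deriv a t‖ ≤ c₀ and d₁ ≤ ‖x - a t‖ ≤ d₀ for all t. Let f : ℝ → ℝ³, ν ∈ ℝ³, and let Hν be the tangential field of the orbit a. Then for every t ≥ 0, c · ‖f t ×₃ ν‖_∞ / (4π · d₀ · (c + c₀)) ≤ ‖Hν (g t)‖_∞ ≤ c · ‖f t ×₃ ν‖_∞ / (4π · d₁ · (c − c₀)). -/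
noncomputable section

/-- The maximum norm `‖y‖_∞ = maxature over i of |y i|` on `ℝ³`. -/
def ninf (y : E3) : ℝ := ⨆ i : Fin 3, |y i|

/-- Two-sided bounds on the size of the tangential field along the
reparametrized time `g t = t + ‖x - a t‖ / c`:
`c ‖f t ×₃ ν‖_∞ / (4π d₀ (c + c₀)) ≤ ‖Hν (g t)‖_∞ ≤ c ‖f t ×₃ ν‖_∞ / (4π d₁ (c − c₀))`. -/
theorem stmt_7 (c c₀ d₁ d₀ : ℝ) (hc₀ : 0 < c₀) (hc₀c : c₀ < c)
    (hd₁ : 0 < d₁) (hd₁d₀ : d₁ ≤ d₀)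
    (x : E3) (a : ℝ → E3)
    (ha : Differentiable ℝ a)
    (hspeed : ∀ t : ℝ, ‖deriv a t‖ ≤ c₀)
    (hdist : ∀ t : ℝ, d₁ ≤ ‖x - a t‖ ∧ ‖x - a t‖ ≤ d₀)
    (f : ℝ → E3) (ν : E3)
    (Hν : ℝ → E3) (hH : tangentialField c x a f ν Hν) :
    ∀ t : ℝ, 0 ≤ t →
      c * ninf (cross3 (f t) ν) / (4 * Real.pi * d₀ * (c + c₀)) ≤
        ninf (Hν (t + ‖x - a t‖ / c)) ∧
      ninf (Hν (t + ‖x - a t‖ / c)) ≤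
        c * ninf (cross3 (f t) ν) / (4 * Real.pi * d₁ * (c - c₀)) := by
  intro t ht
  have hc : 0 < c := hc₀.trans hc₀c
  have hπ : 0 < Real.pi := Real.pi_pos
  -- the orbit is c₀-Lipschitz
  have lipa : LipschitzWith c₀.toNNReal a := by
    refine lipschitzWith_of_nnnorm_deriv_le ha fun s => ?_
    rw [← NNReal.coe_le_coe, coe_nnnorm, Real.coe_toNNReal _ hc₀.le]
    exact hspeed s
  -- hence so is the distance function v
  set v : ℝ → ℝ := fun r => ‖x - a r‖ with hv
  have lipv : LipschitzWith c₀.toNNReal v := by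
    refine LipschitzWith.of_dist_le_mul fun s s' => ?_
    have h1 : dist (v s) (v s') ≤ dist (a s) (a s') := by
      rw [Real.dist_eq, dist_eq_norm]
      calc |v s - v s'| ≤ ‖(x - a s) - (x - a s')‖ := abs_norm_sub_norm_le _ _
        _ = ‖a s' - a s‖ := by rw [sub_sub_sub_cancel_left]
        _ = ‖a s - a s'‖ := norm_sub_rev _ _
    have h2 : dist (a s) (a s') ≤ c₀ * dist s s' := by
      simpa [Real.coe_toNNReal _ hc₀.le] using lipa.dist_le_mul s s'
    rw [Real.coe_toNNReal _ hc₀.le]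
    exact h1.trans h2
  have hderiv : |deriv v t| ≤ c₀ := by
    have h := norm_deriv_le_of_lipschitz (x₀ := t) lipv
    rwa [Real.norm_eq_abs, Real.coe_toNNReal _ hc₀.le] at h
  have hd1 : d₁ ≤ v t := (hdist t).1
  have hd0 : v t ≤ d₀ := (hdist t).2
  have hlo : c - c₀ ≤ c + deriv v t := by
    have := neg_abs_le (deriv v t); linarith
  have hhi : c + deriv v t ≤ c + c₀ := by
    have := le_abs_self (deriv v t); linarith
  have hpos : 0 < c + deriv v t := lt_of_lt_of_le (by linarith) hlo
  -- denominators
  have hDlo : 0 < 4 * Real.pi * d₁ * (c - c₀) := mul_pos (by positivity) (sub_pos.2 hc₀c)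
  have key1 : d₁ * (c - c₀) ≤ v t * (c + deriv v t) :=
    mul_le_mul hd1 hlo (sub_pos.2 hc₀c).le (hd₁.le.trans hd1)
  have key2 : v t * (c + deriv v t) ≤ d₀ * (c + c₀) :=
    mul_le_mul hd0 hhi hpos.le (hd₁.trans_le hd₁d₀).le
  have hDmidlo : 4 * Real.pi * d₁ * (c - c₀) ≤ 4 * Real.pi * v t * (c + deriv v t) := by
    calc 4 * Real.pi * d₁ * (c - c₀) = (4 * Real.pi) * (d₁ * (c - c₀)) := by ring
      _ ≤ (4 * Real.pi) * (v t * (c + deriv v t)) :=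
        mul_le_mul_of_nonneg_left key1 (by positivity)
      _ = 4 * Real.pi * v t * (c + deriv v t) := by ring
  have hDmidhi : 4 * Real.pi * v t * (c + deriv v t) ≤ 4 * Real.pi * d₀ * (c + c₀) := by
    calc 4 * Real.pi * v t * (c + deriv v t) = (4 * Real.pi) * (v t * (c + deriv v t)) := by ring
      _ ≤ (4 * Real.pi) * (d₀ * (c + c₀)) := mul_le_mul_of_nonneg_left key2 (by positivity)
      _ = 4 * Real.pi * d₀ * (c + c₀) := by ring
  have hDmid : 0 < 4 * Real.pi * v t * (c + deriv v t) := hDlo.trans_le hDmidlo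
  set k : ℝ := c / (4 * Real.pi * v t * (c + deriv v t)) with hk
  have hkpos : 0 < k := div_pos hc hDmid
  have hklo : c / (4 * Real.pi * d₀ * (c + c₀)) ≤ k :=
    div_le_div_of_nonneg_left hc.le hDmid hDmidhi
  have hkhi : k ≤ c / (4 * Real.pi * d₁ * (c - c₀)) :=
    div_le_div_of_nonneg_left hc.le hDlo hDmidlo
  -- rewrite Hν at g t
  have hHt : Hν (t + ‖x - a t‖ / c) = k • cross3 (f t) ν := hH.2 t ht
  set w : E3 := cross3 (f t) ν with hw
  have hbdd : BddAbove (Set.range fun i : Fin 3 => |w i|) :=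
    Set.Finite.bddAbove (Set.finite_range _)
  have hwnn : 0 ≤ ninf w :=
    (abs_nonneg (w 0)).trans (le_ciSup hbdd 0)
  have hsmul : ninf (k • w) = k * ninf w := by
    unfold ninf
    simp only [PiLp.smul_apply, smul_eq_mul, abs_mul, abs_of_pos hkpos]
    rw [Real.mul_iSup_of_nonneg hkpos.le]
  rw [hHt, hsmul]
  constructor
  · calc c * ninf w / (4 * Real.pi * d₀ * (c + c₀))
        = (c / (4 * Real.pi * d₀ * (c + c₀))) * ninf w := by ring
      _ ≤ k * ninf w := mul_le_mul_of_nonneg_right hklo hwnn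
  · calc k * ninf w
        ≤ (c / (4 * Real.pi * d₁ * (c - c₀))) * ninf w :=
          mul_le_mul_of_nonneg_right hkhi hwnn
      _ = c * ninf w / (4 * Real.pi * d₁ * (c - c₀)) := by ring
end
end

section
/- Let 0 < c₀ < c, a₀ > 0, 0 < d₁ ≤ d₀ and T' > 0, let x ∈ ℝ³, and let a : ℝ → ℝ³ be twice continuously differentiable with ‖deriv a t‖ ≤ c₀, ‖deriv (deriv a) t‖ ≤ a₀ and d₁ ≤ ‖x - a t‖ ≤ d₀ for all t. Let f : ℝ → ℝ³ be continuously differentiable, ν ∈ ℝ³, and let Hν be the tangential field of the orbit a. Then Hν is differentiable at every point s = g t with t ∈ (0, T'), and its derivative there satisfies (4π/c) · ‖deriv Hν (g t)‖_∞ ≤ (c/(d₁·(c−c₀)²)) · sup_{r∈[0,T']} ‖deriv (fun r ↦ f r ×₃ ν) r‖_∞ + (c·c₀/(d₁²·(c−c₀)²)) · sup_{r∈[0,T']} ‖f r ×₃ ν‖_∞ + (c·(a₀ + 2c₀²/d₁)/(d₁·(c−c₀)³)) · sup_{r∈[0,T']} ‖f r ×₃ ν‖_∞. -/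
noncomputable section

open scoped RealInnerProductSpace Topology
open Filter

lemma ninf_eq (y : E3) : ninf y = |y 0| ⊔ |y 1| ⊔ |y 2| := by
  have hb : BddAbove (Set.range fun i : Fin 3 => |y i|) :=
    (Set.finite_range _).bddAbove
  refine le_antisymm (ciSup_le fun i => ?_) ?_
  · fin_cases i
    · exact le_sup_of_le_left le_sup_left
    · exact le_sup_of_le_left le_sup_right
    · exact le_sup_right
  · exact sup_le (sup_le (le_ciSup hb 0) (le_ciSup hb 1)) (le_ciSup hb 2)

lemma ninf_nonneg (y : E3) : 0 ≤ ninf y := by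
  rw [ninf_eq]; positivity

lemma abs_le_ninf (y : E3) (i : Fin 3) : |y i| ≤ ninf y :=
  le_ciSup (f := fun i : Fin 3 => |y i|) ((Set.finite_range _).bddAbove) i

lemma ninf_add_le (u v : E3) : ninf (u + v) ≤ ninf u + ninf v := by
  refine ciSup_le fun i => ?_
  have : (u + v) i = u i + v i := rfl
  rw [this]
  exact (abs_add_le _ _).trans (add_le_add (abs_le_ninf u i) (abs_le_ninf v i))

lemma ninf_smul_le (r : ℝ) (u : E3) : ninf (r • u) ≤ |r| * ninf u := by
  refine ciSup_le fun i => ?_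
  have : (r • u) i = r * u i := rfl
  rw [this, abs_mul]
  exact mul_le_mul_of_nonneg_left (abs_le_ninf u i) (abs_nonneg r)

lemma continuous_ninf : Continuous ninf := by
  have h : ∀ i : Fin 3, Continuous fun y : E3 => y i := fun i => by
    simpa using (EuclideanSpace.proj (𝕜 := ℝ) (ι := Fin 3) i).continuous
  have : ninf = fun y : E3 => |y 0| ⊔ |y 1| ⊔ |y 2| := funext ninf_eq
  rw [this]
  exact (((h 0).abs.max (h 1).abs).max (h 2).abs)

def crossL (ν : E3) : E3 →L[ℝ] E3 :=
  LinearMap.toContinuousLinearMap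
  { toFun := fun u => cross3 u ν
    map_add' := by
      intro u v
      ext i
      have h0 : ∀ (a b : E3) (j : Fin 3), (a + b) j = a j + b j := fun _ _ _ => rfl
      fin_cases i <;> simp [cross3, h0] <;> ring
    map_smul' := by
      intro m u
      ext i
      have h0 : ∀ (a : E3) (j : Fin 3), (m • a) j = m * a j := fun _ _ => rfl
      fin_cases i <;> simp [cross3, h0] <;> ring }

lemma crossL_apply (ν u : E3) : crossL ν u = cross3 u ν := rfl

set_option maxHeartbeats 1000000

/-- Differentiability of the tangential field at reparametrized times
`g t`, `t ∈ (0, T')`, together with the bound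
`(4π/c) ‖(Hν)' (g t)‖_∞ ≤ (c/(d₁(c−c₀)²)) sup ‖(f ×₃ ν)'‖_∞
  + (c c₀/(d₁²(c−c₀)²)) sup ‖f ×₃ ν‖_∞ + (c(a₀ + 2c₀²/d₁)/(d₁(c−c₀)³)) sup ‖f ×₃ ν‖_∞`,
where the suprema are over `[0, T']`. -/
theorem stmt_8 (c c₀ a₀ d₁ d₀ T' : ℝ)
    (hc₀ : 0 < c₀) (hc₀c : c₀ < c) (ha₀ : 0 < a₀)
    (hd₁ : 0 < d₁) (hd₁d₀ : d₁ ≤ d₀) (hT' : 0 < T')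
    (x : E3) (a : ℝ → E3)
    (ha : ContDiff ℝ 2 a)
    (hspeed : ∀ t : ℝ, ‖deriv a t‖ ≤ c₀)
    (hacc : ∀ t : ℝ, ‖deriv (deriv a) t‖ ≤ a₀)
    (hdist : ∀ t : ℝ, d₁ ≤ ‖x - a t‖ ∧ ‖x - a t‖ ≤ d₀)
    (f : ℝ → E3) (hf : ContDiff ℝ 1 f) (ν : E3)
    (Hν : ℝ → E3) (hH : tangentialField c x a f ν Hν) :
    ∀ t ∈ Set.Ioo (0 : ℝ) T',
      DifferentiableAt ℝ Hν (t + ‖x - a t‖ / c) ∧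
      4 * Real.pi / c * ninf (deriv Hν (t + ‖x - a t‖ / c)) ≤
        c / (d₁ * (c - c₀) ^ 2) *
            sSup ((fun r : ℝ => ninf (deriv (fun r' : ℝ => cross3 (f r') ν) r)) ''
              Set.Icc 0 T') +
        c * c₀ / (d₁ ^ 2 * (c - c₀) ^ 2) *
            sSup ((fun r : ℝ => ninf (cross3 (f r) ν)) '' Set.Icc 0 T') +
        c * (a₀ + 2 * c₀ ^ 2 / d₁) / (d₁ * (c - c₀) ^ 3) *
            sSup ((fun r : ℝ => ninf (cross3 (f r) ν)) '' Set.Icc 0 T') := by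
  obtain ⟨hH0, hHg⟩ := hH
  intro t ht
  have hc : 0 < c := hc₀.trans hc₀c
  have hπ : 0 < Real.pi := Real.pi_pos
  have hcc₀ : 0 < c - c₀ := by linarith
  have ha1 : Differentiable ℝ a := ha.differentiable (by norm_num)
  have ha2 : ContDiff ℝ 1 (deriv a) := by
    have h2 : ContDiff ℝ (1 + 1) a := by norm_num; exact ha
    exact (contDiff_succ_iff_deriv.mp h2).2.2
  have ha2d : Differentiable ℝ (deriv a) := ha2.differentiable (by norm_num)
  set w : ℝ → E3 := fun r => x - a r with hw_def
  have hw_cd : ContDiff ℝ 2 w := contDiff_const.sub ha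
  have hw_ne : ∀ r, w r ≠ 0 := by
    intro r h
    have h1 := (hdist r).1
    rw [show x - a r = w r from rfl, h, norm_zero] at h1
    linarith
  have hw_d : ∀ r, HasDerivAt w (-(deriv a r)) r := fun r =>
    ((ha1 r).hasDerivAt).const_sub x
  have hw_d2 : ∀ r, HasDerivAt (fun s => -(deriv a s)) (-(deriv (deriv a) r)) r := fun r =>
    ((ha2d r).hasDerivAt).neg
  set v : ℝ → ℝ := fun r => ‖x - a r‖ with hv_def
  have hv_eq : ∀ r, v r = ‖w r‖ := fun _ => rfl
  have hvd₁ : ∀ r, d₁ ≤ v r := fun r => (hdist r).1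
  have hv_pos : ∀ r, 0 < v r := fun r => lt_of_lt_of_le hd₁ (hvd₁ r)
  set V' : ℝ → ℝ := fun r => (⟪w r, -(deriv a r)⟫) / v r with hV'_def
  have hv' : ∀ r, HasDerivAt v (V' r) r := by
    intro r
    have hφ : HasDerivAt (fun s => ⟪w s, w s⟫)
        (⟪w r, -(deriv a r)⟫ + ⟪-(deriv a r), w r⟫) r :=
      (hw_d r).inner ℝ (hw_d r)
    have hφpos : (0:ℝ) < ⟪w r, w r⟫ := by rw [real_inner_self_eq_norm_sq]; exact pow_pos (norm_pos_iff.mpr (hw_ne r)) 2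
    have hsq := (Real.hasDerivAt_sqrt (ne_of_gt hφpos)).comp r hφ
    have hveq : v = fun s => Real.sqrt ⟪w s, w s⟫ := by
      funext s
      rw [hv_eq s, norm_eq_sqrt_real_inner]
    rw [hveq]
    have hsqrt : Real.sqrt ⟪w r, w r⟫ = v r := by
      rw [hv_eq r, norm_eq_sqrt_real_inner]
    refine HasDerivAt.congr_deriv hsq ?_
    symm
    rw [hsqrt]
    show (⟪w r, -(deriv a r)⟫) / v r = _
    rw [real_inner_comm (-(deriv a r)) (w r)]
    generalize (⟪w r, -(deriv a r)⟫ : ℝ) = X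
    have hvne : v r ≠ 0 := ne_of_gt (hv_pos r)
    field_simp
    ring
  have hV'le : ∀ r, |V' r| ≤ c₀ := by
    intro r
    have h1 : |⟪w r, -(deriv a r)⟫| ≤ ‖w r‖ * ‖-(deriv a r)‖ :=
      abs_real_inner_le_norm (w r) (-(deriv a r))
    rw [norm_neg] at h1
    have h2 : ‖deriv a r‖ ≤ c₀ := hspeed r
    have h3 : |⟪w r, -(deriv a r)⟫| ≤ v r * c₀ := by
      refine h1.trans ?_
      rw [← hv_eq r]
      exact mul_le_mul_of_nonneg_left h2 (le_of_lt (hv_pos r))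
    rw [hV'_def]
    rw [abs_div, abs_of_pos (hv_pos r), div_le_iff₀ (hv_pos r)]
    linarith
  -- second derivative of v
  set N' : ℝ → ℝ := fun r => ⟪w r, -(deriv (deriv a) r)⟫ + ⟪-(deriv a r), -(deriv a r)⟫
    with hN'_def
  have hN_d : ∀ r, HasDerivAt (fun s => ⟪w s, -(deriv a s)⟫) (N' r) r :=
    fun r => (hw_d r).inner ℝ (hw_d2 r)
  set V'' : ℝ → ℝ := fun r => (N' r * v r - (⟪w r, -(deriv a r)⟫) * V' r) / (v r) ^ 2
    with hV''_def
  have hv'' : ∀ r, HasDerivAt V' (V'' r) r := fun r =>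
    (hN_d r).div (hv' r) (ne_of_gt (hv_pos r))
  set K : ℝ := a₀ + 2 * c₀ ^ 2 / d₁ with hK_def
  have hKpos : 0 < K := by positivity
  have hV''le : ∀ r, |V'' r| ≤ K := by
    intro r
    have hb1 : |⟪w r, -(deriv (deriv a) r)⟫| ≤ v r * a₀ := by
      refine (abs_real_inner_le_norm _ _).trans ?_
      rw [norm_neg, ← hv_eq r]
      exact mul_le_mul_of_nonneg_left (hacc r) (le_of_lt (hv_pos r))
    have hb2 : |⟪-(deriv a r), -(deriv a r)⟫| ≤ c₀ ^ 2 := by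
      rw [real_inner_self_eq_norm_sq, norm_neg]
      rw [abs_of_nonneg (by positivity)]
      exact pow_le_pow_left₀ (norm_nonneg _) (hspeed r) 2
    have hb3 : |⟪w r, -(deriv a r)⟫| ≤ v r * c₀ := by
      refine (abs_real_inner_le_norm _ _).trans ?_
      rw [norm_neg, ← hv_eq r]
      exact mul_le_mul_of_nonneg_left (hspeed r) (le_of_lt (hv_pos r))
    have hN'le : |N' r| ≤ v r * a₀ + c₀ ^ 2 := (abs_add_le _ _).trans (add_le_add hb1 hb2)
    have hV'r := hV'le r
    have hvr := hv_pos r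
    have hd₁r := hvd₁ r
    rw [hV''_def, abs_div, abs_of_pos (pow_pos hvr 2), div_le_iff₀ (pow_pos hvr 2)]
    have habs : |N' r * v r - (⟪w r, -(deriv a r)⟫) * V' r| ≤
        (v r * a₀ + c₀ ^ 2) * v r + (v r * c₀) * c₀ := by
      refine (abs_sub _ _).trans ?_
      rw [abs_mul, abs_mul]
      refine add_le_add (mul_le_mul_of_nonneg_right hN'le (abs_nonneg _) |>.trans ?_)
        (mul_le_mul hb3 hV'r (abs_nonneg _) (by positivity))
      rw [abs_of_pos hvr]
    refine habs.trans ?_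
    rw [hK_def]
    have key : 2 * c₀ ^ 2 * v r ≤ 2 * c₀ ^ 2 / d₁ * v r ^ 2 := by
      rw [div_mul_eq_mul_div, le_div_iff₀ hd₁]
      nlinarith [mul_le_mul_of_nonneg_left hd₁r (by positivity : (0:ℝ) ≤ 2 * c₀ ^ 2 * v r)]
    nlinarith [key]
  -- the reparametrization g and its local inverse
  set g : ℝ → ℝ := fun r => r + v r / c with hg_def
  have hg' : ∀ r, HasDerivAt g (1 + V' r / c) r := fun r =>
    (hasDerivAt_id r).add ((hv' r).div_const c)
  have hv_cd : ContDiff ℝ 2 v := hw_cd.norm ℝ hw_ne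
  have hg_cd : ContDiff ℝ 1 g :=
    contDiff_id.add ((hv_cd.of_le (by norm_num)).div_const c)
  have hV'tlow : -c₀ ≤ V' t := (abs_le.mp (hV'le t)).1
  set G' : ℝ := 1 + V' t / c with hG'_def
  have hG'eq : G' = (c + V' t) / c := by rw [hG'_def]; field_simp
  have hcV't : 0 < c + V' t := by linarith
  have hG'pos : 0 < G' := by rw [hG'eq]; positivity
  have hG'ne : G' ≠ 0 := ne_of_gt hG'pos
  have hg_sd : HasStrictDerivAt g G' t := by
    have h := (hg_cd.contDiffAt (x := t)).hasStrictDerivAt (by norm_num)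
    rwa [(hg' t).deriv] at h
  set inv : ℝ → ℝ := hg_sd.localInverse g G' t hG'ne with hinv_def
  have hinv_sd : HasStrictDerivAt inv G'⁻¹ (g t) := hg_sd.to_localInverse hG'ne
  have e := hg_sd.hasStrictFDerivAt_equiv hG'ne
  have h_right : ∀ᶠ s in 𝓝 (g t), g (inv s) = s := e.eventually_right_inverse
  have h_at : inv (g t) = t := e.localInverse_apply_image
  have h_cont : ContinuousAt inv (g t) := e.localInverse_continuousAt
  have h_pos : ∀ᶠ s in 𝓝 (g t), 0 < inv s := by
    have h0 : 0 < inv (g t) := by rw [h_at]; exact ht.1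
    exact h_cont.eventually (eventually_gt_nhds h0)
  -- the field F with Hν (g r) = F r for r ≥ 0
  set D : ℝ → ℝ := fun r => 4 * Real.pi * v r * (c + V' r) with hD_def
  have hcV' : ∀ r, 0 < c + V' r := fun r => by
    have := (abs_le.mp (hV'le r)).1; linarith
  have hD_pos : ∀ r, 0 < D r := fun r => by
    rw [hD_def]
    have := hv_pos r; have := hcV' r
    positivity
  set D' : ℝ → ℝ := fun r => 4 * Real.pi * V' r * (c + V' r) + 4 * Real.pi * v r * V'' r
    with hD'_def
  have hD_d : ∀ r, HasDerivAt D (D' r) r := by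
    intro r
    have h1 : HasDerivAt (fun s => 4 * Real.pi * v s) (4 * Real.pi * V' r) r :=
      (hv' r).const_mul _
    have h2 : HasDerivAt (fun s => c + V' s) (V'' r) r := (hv'' r).const_add c
    exact h1.mul h2
  set σ : ℝ → ℝ := fun r => c / D r with hσ_def
  set Sg' : ℝ → ℝ := fun r => (0 * D r - c * D' r) / D r ^ 2 with hSg'_def
  have hσ_d : ∀ r, HasDerivAt σ (Sg' r) r := fun r =>
    (hasDerivAt_const r c).div (hD_d r) (ne_of_gt (hD_pos r))
  have hfd : Differentiable ℝ f := hf.differentiable (by norm_num)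
  set P : ℝ → E3 := fun r => cross3 (f r) ν with hP_def
  have hP_d : ∀ r, HasDerivAt P (crossL ν (deriv f r)) r := fun r =>
    (crossL ν).hasFDerivAt.comp_hasDerivAt r (hfd r).hasDerivAt
  set F : ℝ → E3 := fun r => σ r • P r with hF_def
  have hHgF : ∀ r, 0 ≤ r → Hν (g r) = F r := by
    intro r hr
    have h := hHg r hr
    rw [(hv' r).deriv] at h
    exact h
  set F't : E3 := σ t • crossL ν (deriv f t) + Sg' t • P t with hF't_def
  have hF_d : HasDerivAt F F't t := (hσ_d t).smul (hP_d t)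
  have h_eq : Hν =ᶠ[𝓝 (g t)] fun s => F (inv s) := by
    filter_upwards [h_right, h_pos] with s hs1 hs2
    calc Hν s = Hν (g (inv s)) := by rw [hs1]
    _ = F (inv s) := hHgF (inv s) hs2.le
  have h_comp : HasDerivAt (fun s => F (inv s)) (G'⁻¹ • F't) (g t) := by
    have := hF_d.scomp_of_eq (g t) hinv_sd.hasDerivAt h_at.symm
    exact this
  have hHν_d : HasDerivAt Hν (G'⁻¹ • F't) (g t) := h_comp.congr_of_eventuallyEq h_eq
  -- conclude
  have hgt : t + ‖x - a t‖ / c = g t := rfl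
  rw [hgt]
  refine ⟨hHν_d.differentiableAt, ?_⟩
  rw [hHν_d.deriv]
  -- suprema bounds
  have hPcont : Continuous fun r : ℝ => ninf (cross3 (f r) ν) :=
    continuous_ninf.comp ((crossL ν).continuous.comp hf.continuous)
  have hP'cont : Continuous fun r : ℝ => ninf (deriv P r) := by
    have hdP : deriv P = fun r => crossL ν (deriv f r) := funext fun r => (hP_d r).deriv
    rw [hdP]
    exact continuous_ninf.comp ((crossL ν).continuous.comp (hf.continuous_deriv le_rfl))
  have hmem : t ∈ Set.Icc (0:ℝ) T' := ⟨ht.1.le, ht.2.le⟩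
  set n0 : ℝ := ninf (P t) with hn0_def
  set n1 : ℝ := ninf (crossL ν (deriv f t)) with hn1_def
  have hn0 : 0 ≤ n0 := ninf_nonneg _
  have hn1 : 0 ≤ n1 := ninf_nonneg _
  have hS0le : n0 ≤ sSup ((fun r : ℝ => ninf (cross3 (f r) ν)) '' Set.Icc 0 T') := by
    refine le_csSup ((isCompact_Icc.image hPcont).bddAbove) ⟨t, hmem, rfl⟩
  have hS1le : n1 ≤ sSup ((fun r : ℝ => ninf (deriv P r)) '' Set.Icc 0 T') := by
    refine le_csSup ((isCompact_Icc.image hP'cont).bddAbove) ⟨t, hmem, ?_⟩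
    simp only
    rw [(hP_d t).deriv]
  -- main estimates
  have hstep1 : ninf (G'⁻¹ • F't) ≤ |G'⁻¹| * (|σ t| * n1 + |Sg' t| * n0) := by
    refine (ninf_smul_le _ _).trans (mul_le_mul_of_nonneg_left ?_ (abs_nonneg _))
    refine (ninf_add_le _ _).trans ?_
    exact add_le_add (ninf_smul_le _ _) (ninf_smul_le _ _)
  have hq := hv_pos t
  have hq1 := hvd₁ t
  have hp := hcV' t
  have hplow : c - c₀ ≤ c + V' t := by
    have := (abs_le.mp (hV'le t)).1; linarith
  have hGinv : G'⁻¹ = c / (c + V' t) := by rw [hG'eq, inv_div]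
  have hσpos : 0 < σ t := div_pos hc (hD_pos t)
  have hco1 : 4 * Real.pi / c * (c / (c + V' t)) * σ t = c / (v t * (c + V' t) ^ 2) := by
    show 4 * Real.pi / c * (c / (c + V' t)) * (c / (4 * Real.pi * v t * (c + V' t))) = _
    field_simp
  have hco1le : c / (v t * (c + V' t) ^ 2) ≤ c / (d₁ * (c - c₀) ^ 2) := by
    gcongr
  have hD't : |D' t| ≤ 4 * Real.pi * (c₀ * (c + V' t) + v t * K) := by
    have h1 := hV'le t
    have h2 := hV''le t
    have e1 : |4 * Real.pi * V' t * (c + V' t)| = 4 * Real.pi * |V' t| * (c + V' t) := by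
      rw [abs_mul, abs_mul, abs_of_nonneg (by positivity : (0:ℝ) ≤ 4 * Real.pi),
        abs_of_pos hp]
    have e2 : |4 * Real.pi * v t * V'' t| = 4 * Real.pi * v t * |V'' t| := by
      rw [abs_mul, abs_of_nonneg (by positivity : (0:ℝ) ≤ 4 * Real.pi * v t)]
    have f1 : 4 * Real.pi * |V' t| * (c + V' t) ≤ 4 * Real.pi * c₀ * (c + V' t) :=
      mul_le_mul_of_nonneg_right
        (mul_le_mul_of_nonneg_left h1 (by positivity)) hp.le
    have f2 : 4 * Real.pi * v t * |V'' t| ≤ 4 * Real.pi * v t * K :=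
      mul_le_mul_of_nonneg_left h2 (by positivity)
    calc |D' t| ≤ |4 * Real.pi * V' t * (c + V' t)| + |4 * Real.pi * v t * V'' t| :=
          abs_add_le _ _
      _ ≤ 4 * Real.pi * c₀ * (c + V' t) + 4 * Real.pi * v t * K := by
          rw [e1, e2]; exact add_le_add f1 f2
      _ = 4 * Real.pi * (c₀ * (c + V' t) + v t * K) := by ring
  have hSg'le : |Sg' t| ≤ c * (4 * Real.pi * (c₀ * (c + V' t) + v t * K)) / D t ^ 2 := by
    show |(0 * D t - c * D' t) / D t ^ 2| ≤ _
    rw [abs_div, abs_of_pos (pow_pos (hD_pos t) 2)]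
    gcongr
    rw [zero_mul, zero_sub, abs_neg, abs_mul, abs_of_pos hc]
    exact mul_le_mul_of_nonneg_left hD't hc.le
  have hco0 : 4 * Real.pi / c * (c / (c + V' t)) *
        (c * (4 * Real.pi * (c₀ * (c + V' t) + v t * K)) / D t ^ 2)
      = c * c₀ / (v t ^ 2 * (c + V' t) ^ 2) + c * K / (v t * (c + V' t) ^ 3) := by
    show _ * (c * _ / (4 * Real.pi * v t * (c + V' t)) ^ 2) = _
    field_simp
  have hco0le : c * c₀ / (v t ^ 2 * (c + V' t) ^ 2) + c * K / (v t * (c + V' t) ^ 3)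
      ≤ c * c₀ / (d₁ ^ 2 * (c - c₀) ^ 2) + c * K / (d₁ * (c - c₀) ^ 3) := by
    gcongr
  -- assemble
  have h4πc : (0:ℝ) ≤ 4 * Real.pi / c := by positivity
  calc 4 * Real.pi / c * ninf (G'⁻¹ • F't)
      ≤ 4 * Real.pi / c * (|G'⁻¹| * (|σ t| * n1 + |Sg' t| * n0)) :=
        mul_le_mul_of_nonneg_left hstep1 h4πc
    _ = (4 * Real.pi / c * (c / (c + V' t)) * σ t) * n1
        + (4 * Real.pi / c * (c / (c + V' t)) * |Sg' t|) * n0 := by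
        rw [hGinv, abs_of_pos (by positivity : (0:ℝ) < c / (c + V' t)), abs_of_pos hσpos]
        ring
    _ ≤ (c / (d₁ * (c - c₀) ^ 2)) * n1
        + (c * c₀ / (d₁ ^ 2 * (c - c₀) ^ 2) + c * K / (d₁ * (c - c₀) ^ 3)) * n0 := by
        refine add_le_add (mul_le_mul_of_nonneg_right ?_ hn1)
          (mul_le_mul_of_nonneg_right ?_ hn0)
        · rw [hco1]; exact hco1le
        · refine le_trans ?_ hco0le
          rw [← hco0]
          have hcp : (0:ℝ) ≤ 4 * Real.pi / c * (c / (c + V' t)) := by positivity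
          exact mul_le_mul_of_nonneg_left hSg'le hcp
    _ ≤ (c / (d₁ * (c - c₀) ^ 2)) * sSup ((fun r : ℝ => ninf (deriv P r)) '' Set.Icc 0 T')
        + (c * c₀ / (d₁ ^ 2 * (c - c₀) ^ 2) + c * K / (d₁ * (c - c₀) ^ 3)) *
            sSup ((fun r : ℝ => ninf (cross3 (f r) ν)) '' Set.Icc 0 T') := by
        refine add_le_add (mul_le_mul_of_nonneg_left hS1le (by positivity))
          (mul_le_mul_of_nonneg_left hS0le (by positivity))
    _ = _ := by ring
end
end

section
/- (Uniqueness for the inverse moving point source problem.) Let 0 < c₀ < c, a₀ > 0, 0 < d₁ ≤ d₀, T₀ > 0, set T := T₀ + d₀/c, let x₁, x₂, x₃, x₄ ∈ ℝ³ be affinely independent observation points, let ν₁, ν₂, ν₃, ν₄ ∈ ℝ³, and let f : ℝ → ℝ³ be continuously differentiable with inf_{t∈[0,T]} ‖f t ×₃ νⱼ‖_∞ > 0 for each j. Let a, ã : ℝ → ℝ³ be twice continuously differentiable orbits with ‖deriv a t‖ ≤ c₀, ‖deriv (deriv a) t‖ ≤ a₀ and d₁ ≤ ‖xⱼ - a t‖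 ≤ d₀ for all t and each j (and the same bounds for ã), and let Hⱼ and H̃ⱼ be the tangential fields of a and ã relative to xⱼ and νⱼ. If Hⱼ s = H̃ⱼ s for all s ∈ [0, T] and all j = 1,2,3,4, then a t = ã t for all t ∈ [0, T₀]. -/
noncomputable section

open Set
open scoped RealInnerProductSpace

namespace Stmt12

/-- cross product with fixed right factor, as a linear map. -/
def crossLM (v : E3) : E3 →ₗ[ℝ] E3 where
  toFun u := cross3 u v
  map_add' u w := by
    ext i
    fin_cases i <;>
      simp [cross3, EuclideanSpace, PiLp.add_apply] <;> ring
  map_smul' r u := by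
    ext i
    fin_cases i <;>
      simp [cross3, EuclideanSpace, PiLp.smul_apply, smul_eq_mul] <;> ring

def crossCLM (v : E3) : E3 →L[ℝ] E3 := (crossLM v).toContinuousLinearMap

lemma crossCLM_apply (v u : E3) : crossCLM v u = cross3 u v := rfl

lemma coord_le_norm (y : E3) (i : Fin 3) : |y i| ≤ ‖y‖ := by
  rw [EuclideanSpace.norm_eq]
  have h : |y i|^2 ≤ ∑ j, ‖y j‖^2 :=
    Finset.single_le_sum (f := fun j => ‖y j‖^2) (fun j _ => sq_nonneg _) (Finset.mem_univ i)
      |>.trans_eq' (by rw [Real.norm_eq_abs])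
  calc |y i| = Real.sqrt (|y i|^2) := (Real.sqrt_sq (abs_nonneg _)).symm
    _ ≤ _ := Real.sqrt_le_sqrt h

lemma ninf_le_norm (y : E3) : ninf y ≤ ‖y‖ := ciSup_le fun i => coord_le_norm y i

lemma ninf_nonneg (y : E3) : 0 ≤ ninf y :=
  le_ciSup_of_le (Set.Finite.bddAbove (Set.finite_range _)) 0 (abs_nonneg _)

lemma ninf_pos_ne_zero {y : E3} (h : 0 < ninf y) : y ≠ 0 := by
  rintro rfl
  simp [ninf] at h

lemma v_hasDerivAt {x : E3} {a : ℝ → E3} (ha : Differentiable ℝ a) {t : ℝ}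
    (h : x - a t ≠ 0) :
    HasDerivAt (fun r => ‖x - a r‖) (⟪x - a t, -deriv a t⟫ / ‖x - a t‖) t := by
  have hu : HasDerivAt (fun r => x - a r) (-deriv a t) t :=
    ((ha t).hasDerivAt).const_sub x
  have hi : HasDerivAt (fun r => ⟪x - a r, x - a r⟫)
      (⟪x - a t, -deriv a t⟫ + ⟪-deriv a t, x - a t⟫) t := hu.inner ℝ hu
  have hq : ⟪x - a t, x - a t⟫ ≠ 0 := by
    rw [real_inner_self_eq_norm_sq]
    have : 0 < ‖x - a t‖ := norm_pos_iff.mpr h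
    positivity
  have hs := (Real.hasDerivAt_sqrt hq).comp t hi
  have hfun : (fun r => Real.sqrt ⟪x - a r, x - a r⟫) = fun r => ‖x - a r‖ := by
    funext r; rw [norm_eq_sqrt_real_inner]
  rw [Function.comp_def, hfun] at hs
  refine hs.congr_deriv ?_
  rw [← norm_eq_sqrt_real_inner, real_inner_comm (-deriv a t)]
  have hn : ‖x - a t‖ ≠ 0 := norm_ne_zero_iff.mpr h
  field_simp
  ring

lemma v_deriv_abs_le {x : E3} {a : ℝ → E3} (ha : Differentiable ℝ a) {t : ℝ}
    (h : x - a t ≠ 0) :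
    |deriv (fun r => ‖x - a r‖) t| ≤ ‖deriv a t‖ := by
  rw [(v_hasDerivAt ha h).deriv, abs_div, abs_of_nonneg (norm_nonneg _)]
  rcases eq_or_ne (‖x - a t‖) 0 with h0 | h0
  · exact absurd (norm_eq_zero.mp h0) h
  · rw [div_le_iff₀ (lt_of_le_of_ne (norm_nonneg _) (Ne.symm h0))]
    calc |⟪x - a t, -deriv a t⟫| ≤ ‖x - a t‖ * ‖-deriv a t‖ := abs_real_inner_le_norm _ _
      _ = ‖deriv a t‖ * ‖x - a t‖ := by rw [norm_neg]; ring

/-- All basic facts about the arrival-time function `g t = t + ‖x - a t‖ / c`. -/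
lemma orbit_facts (c c₀ d₁ d₀ : ℝ) (hc₀ : 0 < c₀) (hc₀c : c₀ < c) (hd₁ : 0 < d₁)
    (x : E3) (a : ℝ → E3) (ha : ContDiff ℝ 2 a)
    (hspeed : ∀ t, ‖deriv a t‖ ≤ c₀)
    (hdist : ∀ t, d₁ ≤ ‖x - a t‖ ∧ ‖x - a t‖ ≤ d₀) :
    (∀ t, |deriv (fun r => ‖x - a r‖) t| ≤ c₀)
    ∧ (∀ t, HasDerivAt (fun s => s + ‖x - a s‖ / c)
        (1 + deriv (fun r => ‖x - a r‖) t / c) t)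
    ∧ StrictMono (fun s => s + ‖x - a s‖ / c)
    ∧ Function.Surjective (fun s => s + ‖x - a s‖ / c) := by
  have hc : 0 < c := hc₀.trans hc₀c
  have hadiff : Differentiable ℝ a := ha.differentiable (by norm_num)
  have hne : ∀ t, x - a t ≠ 0 := fun t => by
    intro h0
    have := (hdist t).1
    rw [h0, norm_zero] at this
    linarith
  have hvle : ∀ t, |deriv (fun r => ‖x - a r‖) t| ≤ c₀ :=
    fun t => (v_deriv_abs_le hadiff (hne t)).trans (hspeed t)
  have hg : ∀ t, HasDerivAt (fun s => s + ‖x - a s‖ / c)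
      (1 + deriv (fun r => ‖x - a r‖) t / c) t := fun t => by
    have hv := v_hasDerivAt hadiff (hne t)
    rw [hv.deriv]
    exact (hasDerivAt_id' t).add (hv.div_const c)
  have hgpos : ∀ t, 0 < 1 + deriv (fun r => ‖x - a r‖) t / c := fun t => by
    have h1 := (abs_le.mp (hvle t)).1
    have h2 : (1:ℝ) + deriv (fun r => ‖x - a r‖) t / c
        = (c + deriv (fun r => ‖x - a r‖) t) / c := by field_simp
    rw [h2]
    apply div_pos (by linarith) hc
  have hmono : StrictMono (fun s => s + ‖x - a s‖ / c) := by
    apply strictMono_of_deriv_pos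
    intro t
    rw [(hg t).deriv]
    exact hgpos t
  refine ⟨hvle, hg, hmono, ?_⟩
  have hcont : Continuous (fun s => s + ‖x - a s‖ / c) :=
    (Differentiable.continuous (fun t => (hg t).differentiableAt))
  intro y
  have hd₁d₀ : d₁ ≤ d₀ := (hdist 0).1.trans (hdist 0).2
  have h1 : (fun s => s + ‖x - a s‖ / c) (y - d₀ / c) ≤ y := by
    have := (hdist (y - d₀/c)).2
    have hdiv : ‖x - a (y - d₀/c)‖ / c ≤ d₀ / c := div_le_div_of_nonneg_right this hc.le
    simp only
    linarith
  have h2 : y ≤ (fun s => s + ‖x - a s‖ / c) y := by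
    have := (hdist y).1
    have : 0 ≤ ‖x - a y‖ / c := div_nonneg (by linarith) hc.le
    simp only
    linarith
  have hle : y - d₀ / c ≤ y := by
    have : 0 < d₀ / c := div_pos (by linarith) hc
    linarith
  obtain ⟨t, _, ht⟩ := intermediate_value_Icc hle hcont.continuousOn ⟨h1, h2⟩
  exact ⟨t, ht⟩

lemma ratio_lemma (c dA dB vA vB nt nψ : ℝ) (hc : 0 < c) (hdA : 0 < c + dA) (hdB : 0 < c + dB)
    (hvA : 0 < vA) (hvB : 0 < vB) (hnt : 0 < nt) (hnψ : 0 < nψ)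
    (hR : vB * (c + dB) * nt = vA * (c + dA) * nψ) :
    (1 + dB / c)⁻¹ * (1 + dA / c) = (vB / c * nt) / ((vA / c) * nψ) := by
  have e1 : (1 : ℝ) + dB / c = (c + dB) / c := by field_simp
  have e2 : (1 : ℝ) + dA / c = (c + dA) / c := by field_simp
  rw [e1, e2, eq_div_iff (by positivity : (vA / c * nψ) ≠ 0)]
  field_simp
  linear_combination (-1:ℝ) * hR

/-- The first-arrival comparison: the signal from orbit `a` cannot start before the one
from `a'`. -/
lemma start_le (c c₀ d₁ d₀ T₀ : ℝ)
    (hc₀ : 0 < c₀) (hc₀c : c₀ < c) (hd₁ : 0 < d₁) (hT₀ : 0 < T₀)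
    (x νj : E3) (f : ℝ → E3) (hw0 : cross3 (f 0) νj ≠ 0)
    (a a' : ℝ → E3) (ha' : ContDiff ℝ 2 a')
    (hspeed' : ∀ t, ‖deriv a' t‖ ≤ c₀)
    (hdist : ∀ t, d₁ ≤ ‖x - a t‖ ∧ ‖x - a t‖ ≤ d₀)
    (hdist' : ∀ t, d₁ ≤ ‖x - a' t‖ ∧ ‖x - a' t‖ ≤ d₀)
    (H H' : ℝ → E3)
    (hH : tangentialField c x a f νj H) (hH' : tangentialField c x a' f νj H')
    (hdata : ∀ s ∈ Set.Icc (0:ℝ) (T₀ + d₀ / c), H s = H' s) :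
    ‖x - a 0‖ ≤ ‖x - a' 0‖ := by
  have hc : 0 < c := hc₀.trans hc₀c
  by_contra hlt
  push_neg at hlt
  obtain ⟨hvle', -, -, -⟩ := orbit_facts c c₀ d₁ d₀ hc₀ hc₀c hd₁ x a' ha' hspeed' hdist'
  set s : ℝ := ‖x - a' 0‖ / c with hs_def
  have hs0 : H s = 0 := hH.1 s (by rw [hs_def]; gcongr)
  have hmem : s ∈ Set.Icc 0 (T₀ + d₀/c) := by
    constructor
    · exact div_nonneg (norm_nonneg _) hc.le
    · have h2 : s ≤ d₀ / c := div_le_div_of_nonneg_right (hdist' 0).2 hc.le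
      linarith
  have hH'0 := hH'.2 0 le_rfl
  rw [zero_add] at hH'0
  have hcoeff : 0 < c / (4 * Real.pi * ‖x - a' 0‖ * (c + deriv (fun r => ‖x - a' r‖) 0)) := by
    have h1 := (abs_le.mp (hvle' 0)).1
    have hv0 : 0 < ‖x - a' 0‖ := lt_of_lt_of_le hd₁ (hdist' 0).1
    have hπ := Real.pi_pos
    apply div_pos hc
    have h3 : 0 < c + deriv (fun r => ‖x - a' r‖) 0 := by linarith
    positivity
  have hne : H' s ≠ 0 := by
    rw [hs_def, hH'0]
    exact smul_ne_zero hcoeff.ne' hw0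
  exact hne ((hdata s hmem).symm.trans hs0)

set_option maxHeartbeats 2000000 in
/-- Single-observation-point uniqueness of the distance function. -/
lemma one_point (c c₀ d₁ d₀ T₀ : ℝ)
    (hc₀ : 0 < c₀) (hc₀c : c₀ < c) (hd₁ : 0 < d₁) (hd₁d₀ : d₁ ≤ d₀) (hT₀ : 0 < T₀)
    (x νj : E3) (f : ℝ → E3) (hf : ContDiff ℝ 1 f)
    (hη : 0 < sInf ((fun t : ℝ => ninf (cross3 (f t) νj)) '' Set.Icc 0 (T₀ + d₀ / c)))
    (a a' : ℝ → E3) (ha : ContDiff ℝ 2 a) (ha' : ContDiff ℝ 2 a')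
    (hspeed : ∀ t, ‖deriv a t‖ ≤ c₀) (hspeed' : ∀ t, ‖deriv a' t‖ ≤ c₀)
    (hdist : ∀ t, d₁ ≤ ‖x - a t‖ ∧ ‖x - a t‖ ≤ d₀)
    (hdist' : ∀ t, d₁ ≤ ‖x - a' t‖ ∧ ‖x - a' t‖ ≤ d₀)
    (H H' : ℝ → E3)
    (hH : tangentialField c x a f νj H) (hH' : tangentialField c x a' f νj H')
    (hdata : ∀ s ∈ Set.Icc (0:ℝ) (T₀ + d₀ / c), H s = H' s) :
    ∀ t ∈ Set.Icc (0:ℝ) T₀, ‖x - a t‖ = ‖x - a' t‖ := by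
  have hc : 0 < c := hc₀.trans hc₀c
  set T : ℝ := T₀ + d₀ / c with hT_def
  have hTpos : 0 < T := by
    have h := div_pos (show (0:ℝ) < d₀ by linarith) hc
    rw [hT_def]; linarith
  -- the profile w
  set w : ℝ → E3 := fun t => crossCLM νj (f t) with hw_def
  have hwcross : ∀ t, cross3 (f t) νj = w t := fun t => rfl
  have hwC : ContDiff ℝ 1 w := (crossCLM νj).contDiff.comp hf
  have hwcont : Continuous w := hwC.continuous
  -- w is nonvanishing on [0, T]
  have hwne : ∀ y ∈ Set.Icc (0:ℝ) T, w y ≠ 0 := by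
    intro y hy
    apply ninf_pos_ne_zero
    calc (0:ℝ) < sInf ((fun t : ℝ => ninf (cross3 (f t) νj)) '' Set.Icc 0 T) := hη
      _ ≤ ninf (cross3 (f y) νj) := csInf_le
          ⟨0, by rintro z ⟨t, -, rfl⟩; exact ninf_nonneg _⟩ ⟨y, hy, rfl⟩
      _ = ninf (w y) := by rw [hwcross]
  -- lower bound δ and upper bound W for ‖w‖ on [0, T]
  have hcomp : IsCompact (Set.Icc (0:ℝ) T) := isCompact_Icc
  have hnonemp : (Set.Icc (0:ℝ) T).Nonempty := ⟨0, le_rfl, hTpos.le⟩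
  obtain ⟨y₀, hy₀, hmin⟩ := hcomp.exists_isMinOn hnonemp (hwcont.norm.continuousOn)
  obtain ⟨y₁, hy₁, hmax⟩ := hcomp.exists_isMaxOn hnonemp (hwcont.norm.continuousOn)
  set δ : ℝ := ‖w y₀‖ with hδ_def
  set W : ℝ := ‖w y₁‖ with hW_def
  have hδpos : 0 < δ := norm_pos_iff.mpr (hwne y₀ hy₀)
  have hδle : ∀ y ∈ Set.Icc (0:ℝ) T, δ ≤ ‖w y‖ := fun y hy => hmin hy
  have hWle : ∀ y ∈ Set.Icc (0:ℝ) T, ‖w y‖ ≤ W := fun y hy => hmax hy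
  have hδW : δ ≤ W := hδle y₁ hy₁ |>.trans le_rfl |>.trans (le_of_eq rfl) |>.trans (hWle y₁ hy₁) |>.trans le_rfl
  -- Lipschitz bound L for w on [0, T]
  have hderivwcont : Continuous (deriv w) := hwC.continuous_deriv le_rfl
  obtain ⟨L, hL⟩ := hcomp.exists_bound_of_continuousOn hderivwcont.continuousOn
  have hLnonneg : 0 ≤ L := (norm_nonneg _).trans (hL 0 ⟨le_rfl, hTpos.le⟩)
  have hwlip : ∀ y₁ ∈ Set.Icc (0:ℝ) T, ∀ y₂ ∈ Set.Icc (0:ℝ) T,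
      |‖w y₁‖ - ‖w y₂‖| ≤ L * |y₁ - y₂| := by
    intro z₁ h₁ z₂ h₂
    have := Convex.norm_image_sub_le_of_norm_deriv_le
      (fun y _ => (hwC.differentiable one_ne_zero).differentiableAt)
      hL (convex_Icc _ _) h₂ h₁
    calc |‖w z₁‖ - ‖w z₂‖| ≤ ‖w z₁ - w z₂‖ := abs_norm_sub_norm_le _ _
      _ ≤ L * ‖z₁ - z₂‖ := this
      _ = L * |z₁ - z₂| := by rw [Real.norm_eq_abs]
  -- arrival-time functions
  set gA : ℝ → ℝ := fun s => s + ‖x - a s‖ / c with hgA_def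
  set gB : ℝ → ℝ := fun s => s + ‖x - a' s‖ / c with hgB_def
  obtain ⟨hvleA, hgA', hgAmono, hgAsurj⟩ :=
    orbit_facts c c₀ d₁ d₀ hc₀ hc₀c hd₁ x a ha hspeed hdist
  obtain ⟨hvleB, hgB', hgBmono, hgBsurj⟩ :=
    orbit_facts c c₀ d₁ d₀ hc₀ hc₀c hd₁ x a' ha' hspeed' hdist'
  have hgAcont : Continuous gA := Differentiable.continuous (fun t => (hgA' t).differentiableAt)
  -- start times agree
  have hw0 : cross3 (f 0) νj ≠ 0 := by rw [hwcross]; exact hwne 0 ⟨le_rfl, hTpos.le⟩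
  have hstart : ‖x - a 0‖ = ‖x - a' 0‖ := by
    apply le_antisymm
    · exact start_le c c₀ d₁ d₀ T₀ hc₀ hc₀c hd₁ hT₀ x νj f hw0 a a' ha' hspeed' hdist hdist'
        H H' hH hH' hdata
    · exact start_le c c₀ d₁ d₀ T₀ hc₀ hc₀c hd₁ hT₀ x νj f hw0 a' a ha hspeed hdist' hdist
        H' H hH' hH (fun s hs => (hdata s hs).symm)
  have hg00 : gA 0 = gB 0 := by simp only [hgA_def, hgB_def, hstart]
  -- order isomorphism from gB
  set GB : ℝ ≃o ℝ := StrictMono.orderIsoOfSurjective gB hgBmono hgBsurj with hGB_def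
  have hGBapp : ∀ s, gB (GB.symm s) = s := by
    intro s
    have h1 : GB (GB.symm s) = s := GB.apply_symm_apply s
    rwa [show (GB : ℝ → ℝ) = gB from StrictMono.coe_orderIsoOfSurjective _ _ _] at h1
  set ψ : ℝ → ℝ := fun t => GB.symm (gA t) with hψ_def
  have hψcont : Continuous ψ := GB.symm.continuous.comp hgAcont
  have hgBψ : ∀ t, gB (ψ t) = gA t := fun t => hGBapp (gA t)
  have hψ0 : ψ 0 = 0 := hgBmono.injective ((hgBψ 0).trans hg00)
  -- basic positivity of derivatives
  have hgA'pos : ∀ t, 0 < 1 + deriv (fun r => ‖x - a r‖) t / c := by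
    intro t
    have h1 := (abs_le.mp (hvleA t)).1
    have : (1:ℝ) + deriv (fun r => ‖x - a r‖) t / c
        = (c + deriv (fun r => ‖x - a r‖) t) / c := by field_simp
    rw [this]; exact div_pos (by linarith) hc
  have hgB'pos : ∀ t, 0 < 1 + deriv (fun r => ‖x - a' r‖) t / c := by
    intro t
    have h1 := (abs_le.mp (hvleB t)).1
    have : (1:ℝ) + deriv (fun r => ‖x - a' r‖) t / c
        = (c + deriv (fun r => ‖x - a' r‖) t) / c := by field_simp
    rw [this]; exact div_pos (by linarith) hc
  -- membership facts
  have hgA_mem : ∀ t ∈ Set.Icc (0:ℝ) T₀, gA t ∈ Set.Icc (0:ℝ) T := by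
    intro t ht
    constructor
    · have : 0 ≤ ‖x - a t‖ / c := div_nonneg (norm_nonneg _) hc.le
      simp only [hgA_def]; linarith [ht.1]
    · have h2 : ‖x - a t‖ / c ≤ d₀ / c := div_le_div_of_nonneg_right (hdist t).2 hc.le
      simp only [hgA_def, hT_def]; linarith [ht.2]
  have hψ_nonneg : ∀ t, 0 ≤ t → 0 ≤ ψ t := by
    intro t ht
    have : gB 0 ≤ gB (ψ t) := by
      rw [hgBψ t, ← hg00]
      exact (hgAmono.le_iff_le).mpr ht
    exact (hgBmono.le_iff_le).mp this
  have hψ_le : ∀ t ∈ Set.Icc (0:ℝ) T₀, ψ t ≤ T := by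
    intro t ht
    have h1 : ψ t ≤ gB (ψ t) := by
      have : 0 ≤ ‖x - a' (ψ t)‖ / c := div_nonneg (norm_nonneg _) hc.le
      simp only [hgB_def]; linarith
    have h2 := (hgA_mem t ht).2
    rw [hgBψ t] at h1
    linarith
  -- the matched-time vector equation
  have hmatch : ∀ t ∈ Set.Icc (0:ℝ) T₀,
      (c / (4 * Real.pi * ‖x - a t‖ * (c + deriv (fun r => ‖x - a r‖) t))) • w t
      = (c / (4 * Real.pi * ‖x - a' (ψ t)‖ *
          (c + deriv (fun r => ‖x - a' r‖) (ψ t)))) • w (ψ t) := by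
    intro t ht
    have h1 := hH.2 t ht.1
    have h2 := hH'.2 (ψ t) (hψ_nonneg t ht.1)
    have e1 : t + ‖x - a t‖ / c = gA t := rfl
    have e2 : ψ t + ‖x - a' (ψ t)‖ / c = gB (ψ t) := rfl
    rw [e1, hwcross] at h1
    rw [e2, hwcross, hgBψ t] at h2
    rw [← h1, ← h2]
    exact hdata (gA t) (hgA_mem t ht)
  -- positive coefficients
  have hcoeffA : ∀ t, 0 < c / (4 * Real.pi * ‖x - a t‖ * (c + deriv (fun r => ‖x - a r‖) t)) := by
    intro t
    have h1 := (abs_le.mp (hvleA t)).1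
    have hv0 : 0 < ‖x - a t‖ := lt_of_lt_of_le hd₁ (hdist t).1
    have hπ := Real.pi_pos
    have h3 : 0 < c + deriv (fun r => ‖x - a r‖) t := by linarith
    apply div_pos hc; positivity
  have hcoeffB : ∀ t, 0 < c / (4 * Real.pi * ‖x - a' t‖ *
      (c + deriv (fun r => ‖x - a' r‖) t)) := by
    intro t
    have h1 := (abs_le.mp (hvleB t)).1
    have hv0 : 0 < ‖x - a' t‖ := lt_of_lt_of_le hd₁ (hdist' t).1
    have hπ := Real.pi_pos
    have h3 : 0 < c + deriv (fun r => ‖x - a' r‖) t := by linarith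
    apply div_pos hc; positivity
  -- the scalar relation
  have hrel : ∀ t ∈ Set.Icc (0:ℝ) T₀,
      ‖x - a' (ψ t)‖ * (c + deriv (fun r => ‖x - a' r‖) (ψ t)) * ‖w t‖
      = ‖x - a t‖ * (c + deriv (fun r => ‖x - a r‖) t) * ‖w (ψ t)‖ := by
    intro t ht
    have h := congrArg norm (hmatch t ht)
    rw [norm_smul, norm_smul, Real.norm_eq_abs, Real.norm_eq_abs,
      abs_of_pos (hcoeffA t), abs_of_pos (hcoeffB (ψ t))] at h
    have h1 := (abs_le.mp (hvleA t)).1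
    have h1' := (abs_le.mp (hvleB (ψ t))).1
    have hvA : 0 < ‖x - a t‖ := lt_of_lt_of_le hd₁ (hdist t).1
    have hvB : 0 < ‖x - a' (ψ t)‖ := lt_of_lt_of_le hd₁ (hdist' (ψ t)).1
    have hdA : 0 < c + deriv (fun r => ‖x - a r‖) t := by linarith
    have hdB : 0 < c + deriv (fun r => ‖x - a' r‖) (ψ t) := by linarith
    have hπ : Real.pi ≠ 0 := Real.pi_ne_zero
    field_simp at h
    have hπ' := Real.pi_pos
    have h4 : (4 * Real.pi * c) ≠ 0 := by positivity
    apply mul_left_cancel₀ h4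
    linear_combination (4 * Real.pi * c) * h
  have hT₀T : T₀ ≤ T := by
    have hdc : 0 ≤ d₀ / c := div_nonneg (by linarith) hc.le
    rw [hT_def]; linarith
  -- truncation to [0, T₀]
  set τ : ℝ → ℝ := fun t => min (max t 0) T₀ with hτ_def
  have hτ_mem : ∀ t, τ t ∈ Set.Icc (0:ℝ) T₀ := fun t =>
    ⟨le_min (le_max_right t 0) hT₀.le, min_le_right _ _⟩
  have hτ_id : ∀ t ∈ Set.Icc (0:ℝ) T₀, τ t = t := by
    intro t ht
    simp only [hτ_def]
    rw [max_eq_left ht.1, min_eq_left ht.2]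
  -- the ODE right-hand side
  set F : ℝ → ℝ → ℝ := fun t y =>
    (gA (τ t) - y) * ‖w (τ t)‖ / ((gA (τ t) - τ t) * ‖w y‖) with hF_def
  have hgsub : ∀ s, gA s - s = ‖x - a s‖ / c := fun s => by simp [hgA_def]
  have hgsubB : ∀ s, gB s - s = ‖x - a' s‖ / c := fun s => by simp [hgB_def]
  have hWpos : 0 < W := hδpos.trans_le hδW
  have hd₁c : 0 < d₁ / c := div_pos hd₁ hc
  -- Lipschitz constant
  set Kr : ℝ := W / (d₁ / c * δ * δ) * (T * L + W) with hK_def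
  have hKnonneg : 0 ≤ Kr := by
    apply mul_nonneg (div_nonneg hWpos.le (by positivity))
    have : 0 ≤ T * L := mul_nonneg hTpos.le hLnonneg
    linarith
  have hFlip : ∀ t, LipschitzOnWith (Real.toNNReal Kr) (F t) (Set.Icc (0:ℝ) T) := by
    intro t
    apply LipschitzOnWith.of_dist_le_mul
    intro z₁ h₁ z₂ h₂
    rw [Real.dist_eq, Real.dist_eq, Real.coe_toNNReal _ hKnonneg]
    have hτm := hτ_mem t
    have hτT : τ t ∈ Set.Icc (0:ℝ) T := ⟨hτm.1, hτm.2.trans hT₀T⟩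
    have hp := hgA_mem (τ t) hτm
    have hn1 : δ ≤ ‖w z₁‖ := hδle z₁ h₁
    have hn2 : δ ≤ ‖w z₂‖ := hδle z₂ h₂
    have hn1W : ‖w z₁‖ ≤ W := hWle z₁ h₁
    have hntW : ‖w (τ t)‖ ≤ W := hWle _ hτT
    have hdt : d₁ / c ≤ gA (τ t) - τ t := by
      rw [hgsub]
      exact div_le_div_of_nonneg_right (hdist (τ t)).1 hc.le
    have hn1pos : 0 < ‖w z₁‖ := hδpos.trans_le hn1
    have hn2pos : 0 < ‖w z₂‖ := hδpos.trans_le hn2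
    have hdtpos : 0 < gA (τ t) - τ t := hd₁c.trans_le hdt
    have key : F t z₁ - F t z₂ = (‖w (τ t)‖ / ((gA (τ t) - τ t) * ‖w z₁‖ * ‖w z₂‖)) *
        ((gA (τ t) - z₁) * (‖w z₂‖ - ‖w z₁‖) + (z₂ - z₁) * ‖w z₁‖) := by
      simp only [hF_def]
      field_simp [hdtpos.ne', hn1pos.ne', hn2pos.ne']
      ring
    rw [key, abs_mul]
    have hA : |‖w (τ t)‖ / ((gA (τ t) - τ t) * ‖w z₁‖ * ‖w z₂‖)| ≤ W / (d₁ / c * δ * δ) := by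
      have hden : 0 < (gA (τ t) - τ t) * ‖w z₁‖ * ‖w z₂‖ :=
        mul_pos (mul_pos hdtpos hn1pos) hn2pos
      rw [abs_of_nonneg (div_nonneg (norm_nonneg _) hden.le)]
      apply div_le_div₀ hWpos.le hntW (mul_pos (mul_pos hd₁c hδpos) hδpos)
      have h1 : d₁ / c * δ ≤ (gA (τ t) - τ t) * ‖w z₁‖ :=
        mul_le_mul hdt hn1 hδpos.le hdtpos.le
      calc d₁ / c * δ * δ ≤ (gA (τ t) - τ t) * ‖w z₁‖ * δ :=
            mul_le_mul_of_nonneg_right h1 hδpos.le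
        _ ≤ (gA (τ t) - τ t) * ‖w z₁‖ * ‖w z₂‖ :=
            mul_le_mul_of_nonneg_left hn2 (mul_nonneg hdtpos.le (norm_nonneg _))
    have hB : |(gA (τ t) - z₁) * (‖w z₂‖ - ‖w z₁‖) + (z₂ - z₁) * ‖w z₁‖|
        ≤ (T * L + W) * |z₁ - z₂| := by
      have hb1 : |gA (τ t) - z₁| ≤ T := by
        rw [abs_le]
        constructor <;> [linarith [hp.1, h₁.2]; linarith [hp.2, h₁.1]]
      have hb2' : |‖w z₂‖ - ‖w z₁‖| ≤ L * |z₂ - z₁| := by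
        calc |‖w z₂‖ - ‖w z₁‖| ≤ L * |z₁ - z₂| := by
              rw [abs_sub_comm]; exact hwlip z₁ h₁ z₂ h₂
          _ = L * |z₂ - z₁| := by rw [abs_sub_comm]
      calc |(gA (τ t) - z₁) * (‖w z₂‖ - ‖w z₁‖) + (z₂ - z₁) * ‖w z₁‖|
          ≤ |(gA (τ t) - z₁) * (‖w z₂‖ - ‖w z₁‖)| + |(z₂ - z₁) * ‖w z₁‖| := abs_add_le _ _
        _ = |gA (τ t) - z₁| * |‖w z₂‖ - ‖w z₁‖| + |z₂ - z₁| * |‖w z₁‖| := by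
              rw [abs_mul, abs_mul]
        _ ≤ T * (L * |z₂ - z₁|) + |z₂ - z₁| * W := by
              apply add_le_add
              · exact mul_le_mul hb1 hb2' (abs_nonneg _) hTpos.le
              · apply mul_le_mul_of_nonneg_left _ (abs_nonneg _)
                rw [abs_of_nonneg (norm_nonneg _)]
                exact hn1W
        _ = (T * L + W) * |z₂ - z₁| := by ring
        _ = (T * L + W) * |z₁ - z₂| := by rw [abs_sub_comm]
    calc |‖w (τ t)‖ / ((gA (τ t) - τ t) * ‖w z₁‖ * ‖w z₂‖)| *
          |(gA (τ t) - z₁) * (‖w z₂‖ - ‖w z₁‖) + (z₂ - z₁) * ‖w z₁‖|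
        ≤ (W / (d₁ / c * δ * δ)) * ((T * L + W) * |z₁ - z₂|) :=
          mul_le_mul hA hB (abs_nonneg _)
            (div_nonneg hWpos.le (mul_pos (mul_pos hd₁c hδpos) hδpos).le)
      _ = Kr * |z₁ - z₂| := by rw [hK_def]; ring
  -- the derivative of ψ
  have hψderiv : ∀ t ∈ Set.Icc (0:ℝ) T₀, HasDerivAt ψ (F t (ψ t)) t := by
    intro t ht
    have hinv : HasDerivAt (GB.symm : ℝ → ℝ)
        (1 + deriv (fun r => ‖x - a' r‖) (ψ t) / c)⁻¹ (gA t) :=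
      HasDerivAt.of_local_left_inverse (GB.symm.continuous.continuousAt)
        (hgB' (ψ t)) (hgB'pos (ψ t)).ne' (Filter.Eventually.of_forall hGBapp)
    have hder := hinv.comp t (hgA' t)
    have hvA : 0 < ‖x - a t‖ := lt_of_lt_of_le hd₁ (hdist t).1
    have hvB : 0 < ‖x - a' (ψ t)‖ := lt_of_lt_of_le hd₁ (hdist' (ψ t)).1
    have hdA : 0 < c + deriv (fun r => ‖x - a r‖) t := by
      have := (abs_le.mp (hvleA t)).1; linarith
    have hdB : 0 < c + deriv (fun r => ‖x - a' r‖) (ψ t) := by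
      have := (abs_le.mp (hvleB (ψ t))).1; linarith
    have hwt : 0 < ‖w t‖ := hδpos.trans_le (hδle t ⟨ht.1, ht.2.trans hT₀T⟩)
    have hwψ : 0 < ‖w (ψ t)‖ :=
      hδpos.trans_le (hδle _ ⟨hψ_nonneg t ht.1, hψ_le t ht⟩)
    have hval : (1 + deriv (fun r => ‖x - a' r‖) (ψ t) / c)⁻¹
        * (1 + deriv (fun r => ‖x - a r‖) t / c) = F t (ψ t) := by
      have hR := hrel t ht
      simp only [hF_def]
      rw [hτ_id t ht]
      rw [show gA t - ψ t = ‖x - a' (ψ t)‖ / c from by rw [← hgsubB (ψ t), hgBψ t]]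
      rw [hgsub t]
      exact ratio_lemma c _ _ _ _ _ _ hc hdA hdB hvA hvB hwt hwψ hR
    rw [← hval]
    exact hder
  -- the identity solves the same ODE
  have hFid : ∀ t ∈ Set.Icc (0:ℝ) T₀, F t t = 1 := by
    intro t ht
    have hvA : 0 < ‖x - a t‖ := lt_of_lt_of_le hd₁ (hdist t).1
    have hwt : 0 < ‖w t‖ := hδpos.trans_le (hδle t ⟨ht.1, ht.2.trans hT₀T⟩)
    simp only [hF_def]
    rw [hτ_id t ht, hgsub t]
    exact div_self (mul_pos (div_pos hvA hc) hwt).ne'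
  -- ODE uniqueness
  have heq : Set.EqOn ψ id (Set.Icc 0 T₀) := by
    apply ODE_solution_unique_of_mem_Icc_right (fun t _ => hFlip t)
      (hψcont.continuousOn) ?_ ?_ (continuous_id.continuousOn) ?_ ?_ (by rw [hψ0]; rfl)
    · intro t ht
      exact (hψderiv t ⟨ht.1, ht.2.le⟩).hasDerivWithinAt
    · intro t ht
      exact ⟨hψ_nonneg t ht.1, hψ_le t ⟨ht.1, ht.2.le⟩⟩
    · intro t ht
      have h1 : F t (id t) = 1 := hFid t ⟨ht.1, ht.2.le⟩
      rw [id_eq] at h1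
      rw [show (id : ℝ → ℝ) t = t from rfl, h1]
      exact (hasDerivAt_id t).hasDerivWithinAt
    · intro t ht
      exact ⟨ht.1, ht.2.le.trans hT₀T⟩
  -- conclusion
  intro t ht
  have hψt : ψ t = t := heq ht
  have hgg : gB t = gA t := by
    have h := hgBψ t
    rwa [hψt] at h
  have h2 : t + ‖x - a' t‖ / c = t + ‖x - a t‖ / c := hgg
  have h3 : ‖x - a' t‖ / c = ‖x - a t‖ / c := by linarith
  field_simp at h3
  exact h3.symm


/-- A point of `ℝ³` is determined by its distances to four affinely independent points. -/
lemma eq_of_four_dists {x : Fin 4 → E3} (hx : AffineIndependent ℝ x) {p q : E3}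
    (h : ∀ j, ‖x j - p‖ = ‖x j - q‖) : p = q := by
  have key : ∀ j : Fin 4, 2 * ⟪x j, q - p⟫ = ‖q‖^2 - ‖p‖^2 := by
    intro j
    have h2 : ‖x j - p‖^2 = ‖x j - q‖^2 := by rw [h j]
    rw [norm_sub_sq_real, norm_sub_sq_real] at h2
    rw [inner_sub_right]
    linarith
  have key2 : ∀ j : Fin 4, ⟪x j - x 0, q - p⟫ = 0 := by
    intro j
    rw [inner_sub_left]
    have h1 := key j
    have h0 := key 0
    linarith
  rw [affineIndependent_iff_linearIndependent_vsub ℝ x 0] at hx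
  have hcard : Fintype.card {i : Fin 4 // i ≠ (0 : Fin 4)} = 3 := by simp
  haveI : Nonempty {i : Fin 4 // i ≠ (0 : Fin 4)} := ⟨⟨1, by decide⟩⟩
  have hspan := hx.span_eq_top_of_card_eq_finrank
    (by rw [hcard, finrank_euclideanSpace_fin])
  set u : E3 := q - p with hu_def
  let l : E3 →ₗ[ℝ] ℝ :=
    { toFun := fun y => ⟪y, u⟫
      map_add' := fun y z => inner_add_left y z u
      map_smul' := fun r y => by simpa using real_inner_smul_left y u r }
  have hle : Submodule.span ℝ
      (Set.range fun i : {i : Fin 4 // i ≠ (0 : Fin 4)} => x ↑i -ᵥ x 0)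
      ≤ LinearMap.ker l := by
    rw [Submodule.span_le]
    rintro _ ⟨i, rfl⟩
    simp only [SetLike.mem_coe, LinearMap.mem_ker]
    show ⟪x ↑i - x 0, u⟫ = 0
    exact key2 i
  rw [hspan] at hle
  have hu0 : ⟪u, u⟫ = 0 := hle Submodule.mem_top
  have hu : u = 0 := inner_self_eq_zero.mp hu0
  have := sub_eq_zero.mp hu
  exact this.symm

end Stmt12

/-- **Uniqueness for the inverse moving point source problem.** If the
tangential fields of two admissible orbits `a, a'` coincide on `[0, T]`, `T = T₀ + d₀/c`,
at four non-coplanar observation points, then the orbits coincide on `[0, T₀]`. -/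
theorem stmt_12 (c c₀ a₀ d₁ d₀ T₀ : ℝ)
    (hc₀ : 0 < c₀) (hc₀c : c₀ < c) (ha₀ : 0 < a₀)
    (hd₁ : 0 < d₁) (hd₁d₀ : d₁ ≤ d₀) (hT₀ : 0 < T₀)
    (x : Fin 4 → E3) (hx : AffineIndependent ℝ x)
    (ν : Fin 4 → E3) (f : ℝ → E3) (hf : ContDiff ℝ 1 f)
    (hη : ∀ j : Fin 4,
      0 < sInf ((fun t : ℝ => ninf (cross3 (f t) (ν j))) '' Set.Icc 0 (T₀ + d₀ / c)))
    (a a' : ℝ → E3)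
    (ha : ContDiff ℝ 2 a) (ha' : ContDiff ℝ 2 a')
    (hspeed : ∀ t : ℝ, ‖deriv a t‖ ≤ c₀) (hspeed' : ∀ t : ℝ, ‖deriv a' t‖ ≤ c₀)
    (hacc : ∀ t : ℝ, ‖deriv (deriv a) t‖ ≤ a₀) (hacc' : ∀ t : ℝ, ‖deriv (deriv a') t‖ ≤ a₀)
    (hdist : ∀ (j : Fin 4) (t : ℝ), d₁ ≤ ‖x j - a t‖ ∧ ‖x j - a t‖ ≤ d₀)
    (hdist' : ∀ (j : Fin 4) (t : ℝ), d₁ ≤ ‖x j - a' t‖ ∧ ‖x j - a' t‖ ≤ d₀)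
    (H H' : Fin 4 → ℝ → E3)
    (hH : ∀ j : Fin 4, tangentialField c (x j) a f (ν j) (H j))
    (hH' : ∀ j : Fin 4, tangentialField c (x j) a' f (ν j) (H' j))
    (hdata : ∀ (j : Fin 4), ∀ s ∈ Set.Icc (0 : ℝ) (T₀ + d₀ / c), H j s = H' j s) :
    ∀ t ∈ Set.Icc (0 : ℝ) T₀, a t = a' t := by
  intro t ht
  have hkey : ∀ j : Fin 4, ‖x j - a t‖ = ‖x j - a' t‖ := fun j =>
    Stmt12.one_point c c₀ d₁ d₀ T₀ hc₀ hc₀c hd₁ hd₁d₀ hT₀ (x j) (ν j) f hf (hη j)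
      a a' ha ha' hspeed hspeed' (hdist j) (hdist' j)
      (H j) (H' j) (hH j) (hH' j) (hdata j) t ht
  exact Stmt12.eq_of_four_dists hx hkey
end
end
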